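/- arXiv:2104.14448 — 4 statements merged into one kernel-verified Lean document; each statement's English description precedes it below -/
import Mathlib

section
/- Let λ : [0,∞) → [0,1] be smooth with {λ > 0} = [0,1) and λ ≡ 1 near 0. Then for every R > 0 there exists C > 0 such that the function S(z₁, z') := λ(|z₁|²)·|z'|² + C·|z₁|² is plurisubharmonic on ℂ × B(0,R) ⊂ ℂ × ℂ^{n-1}. -/
open Complex Metric MeasureTheory Real Set

/-- The average of `f` over the circle of radius `r` centered at `z`. -/
noncomputable def cAvg (f : ℂ → ℝ) (z : ℂ) (r : ℝ) : ℝ :=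
  (2 * Real.pi)⁻¹ * ∫ θ in (0:ℝ)..(2 * Real.pi), f (z + (r : ℂ) * Complex.exp (θ * Complex.I))

/-- Sub-mean value property of `f` at `z` with respect to circles whose closed discs lie in `U`. -/
def SubmeanAt (f : ℂ → ℝ) (U : Set ℂ) (z : ℂ) : Prop :=
  ∀ r : ℝ, 0 < r → closedBall z r ⊆ U → f z ≤ cAvg f z r

/-- A real-valued function is subharmonic on `U` if it is upper semicontinuous on `U` and
satisfies the sub-mean value inequality there. -/
def SubharmonicOn (f : ℂ → ℝ) (U : Set ℂ) : Prop :=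
  UpperSemicontinuousOn f U ∧ ∀ z ∈ U, SubmeanAt f U z

/-- A `[-∞,∞)`-valued function is subharmonic on `U` if it is upper semicontinuous on `U`,
nowhere `+∞`, not identically `-∞`, and all of its truncations `max (f ·) (-n)` satisfy the
sub-mean value inequality on `U`. -/
def SubharmonicOnE (f : ℂ → EReal) (U : Set ℂ) : Prop :=
  UpperSemicontinuousOn f U ∧ (∀ z ∈ U, f z < ⊤) ∧ (∃ z ∈ U, f z ≠ ⊥) ∧
  ∀ n : ℕ, ∀ z ∈ U, SubmeanAt (fun w => (max (f w) ((-(n:ℝ) : ℝ) : EReal)).toReal) U z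

/-- A real-valued function on a complex normed space is plurisubharmonic on `U` if it is upper
semicontinuous on `U` and satisfies the sub-mean value inequality along every complex line. -/
def PshOn {E : Type*} [NormedAddCommGroup E] [NormedSpace ℂ E]
    (f : E → ℝ) (U : Set E) : Prop :=
  UpperSemicontinuousOn f U ∧
  ∀ z ∈ U, ∀ v : E, ∀ r : ℝ, 0 < r → (∀ t : ℂ, ‖t‖ ≤ r → z + t • v ∈ U) →
    f z ≤ (2 * Real.pi)⁻¹ *
      ∫ θ in (0:ℝ)..(2 * Real.pi), f (z + ((r : ℂ) * Complex.exp (θ * Complex.I)) • v)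

/-- Strict plurisubharmonicity on `U` (in the sense of Harz–Shcherbina–Tomassini): every small
perturbation by a smooth compactly supported function stays plurisubharmonic. -/
def StrictPshOn {E : Type*} [NormedAddCommGroup E] [NormedSpace ℝ E] [NormedSpace ℂ E]
    (f : E → ℝ) (U : Set E) : Prop :=
  ∀ g : E → ℝ, ContDiff ℝ (⊤ : ℕ∞) g → HasCompactSupport g → tsupport g ⊆ U →
    ∃ ε₀ : ℝ, 0 < ε₀ ∧ ∀ ε : ℝ, |ε| < ε₀ → PshOn (fun z => f z + ε * g z) U

/-- `f` is strictly plurisubharmonic near `z`. -/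
def StrictPshNear {E : Type*} [NormedAddCommGroup E] [NormedSpace ℝ E] [NormedSpace ℂ E]
    (f : E → ℝ) (z : E) : Prop :=
  ∃ V : Set E, IsOpen V ∧ z ∈ V ∧ StrictPshOn f V

/-- The core of `Ω` with respect to `C^k`-smooth plurisubharmonic functions that are bounded
from above. -/
def pshCore {E : Type*} [NormedAddCommGroup E] [NormedSpace ℝ E] [NormedSpace ℂ E]
    (k : ℕ∞) (Ω : Set E) : Set E :=
  {z ∈ Ω | ∀ f : E → ℝ, PshOn f Ω → ContDiffOn ℝ k f Ω →
     (∃ M : ℝ, ∀ w ∈ Ω, f w ≤ M) → ¬ StrictPshNear f z}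

/-- `Ω` is pseudoconvex: it is open and admits a plurisubharmonic exhaustion function. -/
def Pseudoconvex {E : Type*} [NormedAddCommGroup E] [NormedSpace ℂ E] (Ω : Set E) : Prop :=
  IsOpen Ω ∧ ∃ f : E → ℝ, PshOn f Ω ∧
    ∀ c : ℝ, ∃ K : Set E, IsCompact K ∧ K ⊆ Ω ∧ {z ∈ Ω | f z ≤ c} ⊆ K

/-- The Levi form (complex Hessian) of `S` at `z` in direction `ξ`, computed as one quarter of
the Laplacian at `t = 0` of `t ↦ S (z + t • ξ)`. -/
noncomputable def leviForm {E : Type*} [NormedAddCommGroup E] [NormedSpace ℂ E]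
    (S : E → ℝ) (z ξ : E) : ℝ :=
  (1/4) * (deriv (fun x : ℝ => deriv (fun x' : ℝ => S (z + ((x' : ℂ)) • ξ)) x) 0
    + deriv (fun y : ℝ => deriv (fun y' : ℝ => S (z + ((y' : ℂ) * Complex.I) • ξ)) y) 0)

set_option maxHeartbeats 1000000

section Aux

lemma hasDerivAt_quad (A B D x : ℝ) :
    HasDerivAt (fun x' : ℝ => A + B*x' + D*x'^2) (B + 2*D*x) x := by
  have h1 : HasDerivAt (fun x' : ℝ => A + B*x') B x := by
    simpa using ((hasDerivAt_id x).const_mul B).const_add A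
  have h2 : HasDerivAt (fun x' : ℝ => D*x'^2) (D * (2*x)) x := by
    simpa using (hasDerivAt_pow 2 x).const_mul D
  have h := h1.add h2
  exact h.congr_deriv (by ring)

lemma aux_inner_deriv (g : ℝ → ℝ) (hg : ContDiff ℝ (⊤:ℕ∞) g) (A B D E F G C : ℝ) (x : ℝ) :
    HasDerivAt (fun x' : ℝ => g (A + B*x' + D*x'^2) * (E + F*x' + G*x'^2) + C*(A + B*x' + D*x'^2))
      (deriv g (A + B*x + D*x^2) * (B + 2*D*x) * (E + F*x + G*x^2)
        + g (A + B*x + D*x^2) * (F + 2*G*x) + C*(B + 2*D*x)) x := by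
  have hq := hasDerivAt_quad A B D x
  have hr := hasDerivAt_quad E F G x
  have hgd : HasDerivAt g (deriv g (A + B*x + D*x^2)) (A + B*x + D*x^2) :=
    (hg.differentiable (by simp) _).hasDerivAt
  have hcomp : HasDerivAt (fun x' : ℝ => g (A + B*x' + D*x'^2))
      (deriv g (A + B*x + D*x^2) * (B + 2*D*x)) x := hgd.comp x hq
  have h := (hcomp.mul hr).add (hq.const_mul C)
  exact h

lemma aux_second_deriv (g : ℝ → ℝ) (hg : ContDiff ℝ (⊤:ℕ∞) g) (A B D E F G C : ℝ) :
    deriv (fun x : ℝ => deriv (fun x' : ℝ =>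
        g (A + B*x' + D*x'^2) * (E + F*x' + G*x'^2) + C*(A + B*x' + D*x'^2)) x) 0
    = deriv (deriv g) A * B^2 * E + 2*D*(deriv g A)*E + 2*B*(deriv g A)*F
        + 2*G*(g A) + 2*C*D := by
  have hg' : ContDiff ℝ (⊤:ℕ∞) (deriv g) := (contDiff_infty_iff_deriv.mp hg).2
  have heq : (fun x : ℝ => deriv (fun x' : ℝ =>
        g (A + B*x' + D*x'^2) * (E + F*x' + G*x'^2) + C*(A + B*x' + D*x'^2)) x)
      = fun x : ℝ => deriv g (A + B*x + D*x^2) * (B + 2*D*x) * (E + F*x + G*x^2)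
        + g (A + B*x + D*x^2) * (F + 2*G*x) + C*(B + 2*D*x) :=
    funext fun x => (aux_inner_deriv g hg A B D E F G C x).deriv
  rw [heq]
  have hq := hasDerivAt_quad A B D 0
  have hr := hasDerivAt_quad E F G 0
  have hlin : HasDerivAt (fun x : ℝ => B + 2*D*x) (2*D) 0 := by
    simpa using ((hasDerivAt_id (0:ℝ)).const_mul (2*D)).const_add B
  have hlin2 : HasDerivAt (fun x : ℝ => F + 2*G*x) (2*G) 0 := by
    simpa using ((hasDerivAt_id (0:ℝ)).const_mul (2*G)).const_add F
  have h1 : HasDerivAt (fun x : ℝ => deriv g (A + B*x + D*x^2))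
      (deriv (deriv g) (A + B*0 + D*0^2) * (B + 2*D*0)) 0 :=
    HasDerivAt.comp 0 ((hg'.differentiable (by simp) _).hasDerivAt) hq
  have h2 : HasDerivAt (fun x : ℝ => g (A + B*x + D*x^2))
      (deriv g (A + B*0 + D*0^2) * (B + 2*D*0)) 0 :=
    HasDerivAt.comp 0 ((hg.differentiable (by simp) _).hasDerivAt) hq
  have hcombo := (((h1.mul hlin).mul hr).add (h2.mul hlin2)).add (hlin.const_mul C)
  exact hcombo.deriv.trans (by norm_num; ring)

lemma normsq_add_smul {E : Type*} [NormedAddCommGroup E] [InnerProductSpace ℂ E]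
    (w v : E) (c : ℂ) :
    ‖w + c • v‖^2 = ‖w‖^2 + (2 * Complex.re (c * inner ℂ w v)) + Complex.normSq c * ‖v‖^2 := by
  have h := @norm_add_sq ℂ E _ _ _ w (c • v)
  rw [h, inner_smul_right]
  rw [norm_smul]
  simp [mul_pow, Complex.sq_norm]
  try ring

lemma normsq_add_real_smul {E : Type*} [NormedAddCommGroup E] [InnerProductSpace ℂ E]
    (w v : E) (x : ℝ) :
    ‖w + ((x:ℂ)) • v‖^2
      = ‖w‖^2 + (2 * Complex.re (inner ℂ w v : ℂ)) * x + ‖v‖^2 * x^2 := by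
  rw [normsq_add_smul]
  simp [Complex.normSq_ofReal]
  ring

lemma normsq_add_realI_smul {E : Type*} [NormedAddCommGroup E] [InnerProductSpace ℂ E]
    (w v : E) (x : ℝ) :
    ‖w + ((x:ℂ) * Complex.I) • v‖^2
      = ‖w‖^2 + (-2 * Complex.im (inner ℂ w v : ℂ)) * x + ‖v‖^2 * x^2 := by
  rw [normsq_add_smul]
  simp [Complex.normSq_mul, Complex.normSq_ofReal]
  ring

lemma grad_sq_le (f : ℝ → ℝ) (hf : ContDiff ℝ (⊤:ℕ∞) f) (M : ℝ) (hM : 0 < M)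
    (hf0 : ∀ t, 0 ≤ f t) (hf2 : ∀ t, |deriv (deriv f) t| ≤ M) (x : ℝ) :
    (deriv f x)^2 ≤ 2*M*f x := by
  have hfd : Differentiable ℝ f := hf.differentiable (by simp)
  have hf' : ContDiff ℝ (⊤:ℕ∞) (deriv f) := (contDiff_infty_iff_deriv.mp hf).2
  have hf'd : Differentiable ℝ (deriv f) := hf'.differentiable (by simp)
  set d := deriv f x with hd
  set ψ : ℝ → ℝ := fun s => d + M*s - deriv f (x+s) with hψ
  have hψs : ∀ s, HasDerivAt ψ (M - deriv (deriv f) (x+s)) s := by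
    intro s
    have h1 : HasDerivAt (fun s : ℝ => d + M*s) M s := by
      simpa using ((hasDerivAt_id s).const_mul M).const_add d
    have h2 : HasDerivAt (fun s : ℝ => deriv f (x+s)) (deriv (deriv f) (x+s)) s := by
      have hadd : HasDerivAt (fun s : ℝ => x + s) 1 s := by
        simpa using (hasDerivAt_id s).const_add x
      simpa [Function.comp_def] using HasDerivAt.comp s (hf'd (x+s)).hasDerivAt hadd
    exact h1.sub h2
  have hψmono : Monotone ψ := by
    apply monotone_of_deriv_nonneg
    · exact fun s => (hψs s).differentiableAt
    · intro s
      rw [(hψs s).deriv]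
      have := abs_le.mp (hf2 (x+s))
      linarith [this.2]
  have hψ0 : ψ 0 = 0 := by simp [hψ, hd]
  set φ : ℝ → ℝ := fun s => f x + d*s + M*s^2/2 - f (x+s) with hφ
  have hφs : ∀ s, HasDerivAt φ (ψ s) s := by
    intro s
    have h1 : HasDerivAt (fun s : ℝ => f x + d*s) d s := by
      simpa using ((hasDerivAt_id s).const_mul d).const_add (f x)
    have h2 : HasDerivAt (fun s : ℝ => M*s^2/2) (M*s) s := by
      have := (hasDerivAt_pow 2 s).const_mul M
      have h3 := this.div_const 2
      exact h3.congr_deriv (by ring)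
    have hadd : HasDerivAt (fun s : ℝ => x + s) 1 s := by
      simpa using (hasDerivAt_id s).const_add x
    have h4 : HasDerivAt (fun s : ℝ => f (x+s)) (deriv f (x+s)) s := by
      simpa [Function.comp_def] using HasDerivAt.comp s (hfd (x+s)).hasDerivAt hadd
    have := (h1.add h2).sub h4
    exact this
  have hφ0 : φ 0 = 0 := by simp [hφ]
  have hφnonneg : ∀ s, 0 ≤ φ s := by
    intro s
    rcases le_or_gt 0 s with hs | hs
    · have hφdiff : Differentiable ℝ φ := fun s => (hφs s).differentiableAt
      have hmono : MonotoneOn φ (Set.Ici (0:ℝ)) := by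
        apply monotoneOn_of_deriv_nonneg (convex_Ici 0)
        · exact hφdiff.continuous.continuousOn
        · intro t ht
          exact ((hφs t).differentiableAt).differentiableWithinAt
        · intro t ht
          rw [(hφs t).deriv]
          have : (0:ℝ) ≤ t := le_of_lt (by simpa using ht)
          calc (0:ℝ) = ψ 0 := hψ0.symm
            _ ≤ ψ t := hψmono this
      have := hmono (Set.self_mem_Ici) (Set.mem_Ici.mpr hs) hs
      rwa [hφ0] at this
    · have hφdiff : Differentiable ℝ φ := fun s => (hφs s).differentiableAt
      have hanti : AntitoneOn φ (Set.Iic (0:ℝ)) := by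
        apply antitoneOn_of_deriv_nonpos (convex_Iic 0)
        · exact hφdiff.continuous.continuousOn
        · intro t ht
          exact ((hφs t).differentiableAt).differentiableWithinAt
        · intro t ht
          rw [(hφs t).deriv]
          have : t ≤ (0:ℝ) := le_of_lt (by simpa using ht)
          calc ψ t ≤ ψ 0 := hψmono this
            _ = 0 := hψ0
      have := hanti (Set.mem_Iic.mpr hs.le) (Set.self_mem_Iic) hs.le
      rwa [hφ0] at this
  have key := hφnonneg (-d/M)
  have hfx := hf0 (x + (-d/M))
  have hkey : f x + d*(-d/M) + M*(-d/M)^2/2 - f (x + (-d/M)) ≥ 0 := key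
  have hM' : M ≠ 0 := ne_of_gt hM
  have expand : d*(-d/M) + M*(-d/M)^2/2 = -(d^2/(2*M)) := by field_simp; ring
  have h5 : d^2/(2*M) ≤ f x := by linarith [expand]
  rw [div_le_iff₀ (by positivity : (0:ℝ) < 2*M)] at h5
  linarith

end Aux

lemma final_ineq (M R A D E G gA a1 a2 Pre Pim Qre Qim : ℝ)
    (hM1 : 1 ≤ M) (hA0 : 0 ≤ A) (hA1 : A ≤ 1) (hD0 : 0 ≤ D) (hE0 : 0 ≤ E)
    (hER : E ≤ R^2) (hG0 : 0 ≤ G) (hg0 : 0 ≤ gA) (hgrad : a1^2 ≤ 2*M*gA)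
    (ha1l : -M ≤ a1) (ha1r : a1 ≤ M) (ha2l : -M ≤ a2) (ha2r : a2 ≤ M)
    (hP : Pre^2 + Pim^2 ≤ A*D) (hQ : Qre^2 + Qim^2 ≤ E*G) :
    0 ≤ (1/4) * ((a2*(2*Pre)^2*E + 2*D*a1*E + 2*(2*Pre)*a1*(2*Qre) + 2*G*gA
        + 2*(4*M*R^2+1)*D)
      + (a2*(-2*Pim)^2*E + 2*D*a1*E + 2*(-2*Pim)*a1*(-2*Qim) + 2*G*gA
        + 2*(4*M*R^2+1)*D)) := by
  have hM0 : (0:ℝ) ≤ M := by linarith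
  have hc1 : (Pre*Qre+Pim*Qim)^2 ≤ (Pre^2+Pim^2)*(Qre^2+Qim^2) := by
    nlinarith [sq_nonneg (Pre*Qim - Pim*Qre)]
  have hc2 : (Pre^2+Pim^2)*(Qre^2+Qim^2) ≤ (A*D)*(E*G) :=
    mul_le_mul hP hQ (by positivity) (mul_nonneg hA0 hD0)
  have hd1 : A*D ≤ D := mul_le_of_le_one_left hD0 hA1
  have hd2 : E*G ≤ R^2*G := mul_le_mul_of_nonneg_right hER hG0
  have hc3 : (A*D)*(E*G) ≤ D*(R^2*G) :=
    mul_le_mul hd1 hd2 (mul_nonneg hE0 hG0) hD0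
  have hX2 : (Pre*Qre+Pim*Qim)^2 ≤ D*(R^2*G) := by linarith
  -- second-derivative term
  have hq2 : (Pre^2+Pim^2)*E ≤ D*R^2 :=
    mul_le_mul (le_trans hP hd1) hER hE0 hD0
  have hs1 : -(M*(D*R^2)) ≤ a2*((Pre^2+Pim^2)*E) := by
    have f1 : 0 ≤ (a2 + M) * ((Pre^2+Pim^2)*E) :=
      mul_nonneg (by linarith) (by positivity)
    have f2 : M*((Pre^2+Pim^2)*E) ≤ M*(D*R^2) :=
      mul_le_mul_of_nonneg_left hq2 hM0
    nlinarith [f1, f2]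
  -- first-derivative diagonal term
  have hs2 : -(M*(D*R^2)) ≤ a1*(D*E) := by
    have f1 : 0 ≤ (a1 + M) * (D*E) :=
      mul_nonneg (by linarith) (mul_nonneg hD0 hE0)
    have f2 : M*(D*E) ≤ M*(D*R^2) :=
      mul_le_mul_of_nonneg_left (mul_le_mul_of_nonneg_left hER hD0) hM0
    nlinarith [f1, f2]
  -- cross term
  have hb : 0 ≤ gA * G + 2*M*R^2*D := by positivity
  have hsq : (2*a1*(Pre*Qre+Pim*Qim))^2 ≤ (gA * G + 2*M*R^2*D)^2 := by
    have f1 : a1^2 * (Pre*Qre+Pim*Qim)^2 ≤ (2*M*gA) * (D*(R^2*G)) :=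
      mul_le_mul hgrad hX2 (sq_nonneg _) (by positivity)
    nlinarith [f1, sq_nonneg (gA * G - 2*M*R^2*D)]
  have hcross : -(gA * G + 2*M*R^2*D) ≤ 2*a1*(Pre*Qre+Pim*Qim) := by
    nlinarith [hsq, hb]
  linarith [hs1, hs2, hcross, hD0]

lemma final_ineq0 (M R D Pre Pim Qre Qim E G : ℝ) (hM : 0 ≤ M) (hD0 : 0 ≤ D) :
    0 ≤ (1/4) * (((0:ℝ)*(2*Pre)^2*E + 2*D*0*E + 2*(2*Pre)*0*(2*Qre) + 2*G*0
        + 2*(4*M*R^2+1)*D)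
      + ((0:ℝ)*(-2*Pim)^2*E + 2*D*0*E + 2*(-2*Pim)*0*(-2*Qim) + 2*G*0
        + 2*(4*M*R^2+1)*D)) := by
  have h1 : 0 ≤ M*R^2*D := by positivity
  linarith [h1, hD0]



theorem stmt_1 (m : ℕ) (l : ℝ → ℝ)
    (hl : ContDiffOn ℝ (⊤ : ℕ∞) l (Set.Ici 0))
    (hrange : ∀ t : ℝ, 0 ≤ t → l t ∈ Set.Icc (0:ℝ) 1)
    (hsupp : ∀ t : ℝ, 0 ≤ t → (0 < l t ↔ t < 1))
    (hone : ∃ δ : ℝ, 0 < δ ∧ ∀ t ∈ Set.Ico (0:ℝ) δ, l t = 1) (R : ℝ) (hR : 0 < R) :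
    ∃ C : ℝ, 0 < C ∧
      ∀ z : ℂ × EuclideanSpace ℂ (Fin m), ‖z.2‖ < R →
        ∀ ξ : ℂ × EuclideanSpace ℂ (Fin m),
          0 ≤ leviForm (fun p => l (‖p.1‖ ^ 2) * ‖p.2‖ ^ 2 + C * ‖p.1‖ ^ 2) z ξ := by
  obtain ⟨δ, hδpos, hδ1⟩ := hone
  have hδle : δ ≤ 1 := by
    by_contra h
    push_neg at h
    have h1 : l 1 = 1 := hδ1 1 ⟨by norm_num, h⟩
    have := (hsupp 1 (by norm_num)).mp (by rw [h1]; norm_num)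
    exact lt_irrefl 1 this
  set g : ℝ → ℝ := fun t => if t < δ/2 then 1 else l t with hgdef
  have hg1 : ∀ t, t < δ → g t = 1 := by
    intro t ht
    by_cases h : t < δ/2
    · simp [hgdef, h]
    · have h0 : (0:ℝ) ≤ t := le_trans (by positivity) (not_lt.mp h)
      simp only [hgdef, if_neg h]
      exact hδ1 t ⟨h0, ht⟩
  have hgl : ∀ t, 0 ≤ t → g t = l t := by
    intro t ht
    by_cases h : t < δ/2
    · have : l t = 1 := hδ1 t ⟨ht, lt_trans h (by linarith)⟩
      simp [hgdef, h, this]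
    · simp [hgdef, h]
  have hg0 : ∀ t, 1 ≤ t → g t = 0 := by
    intro t ht
    have h0 : (0:ℝ) ≤ t := le_trans zero_le_one ht
    rw [hgl t h0]
    have h1 := (hsupp t h0)
    have h2 := (hrange t h0).1
    by_contra h
    have : 0 < l t := lt_of_le_of_ne h2 (Ne.symm h)
    exact absurd (h1.mp this) (not_lt.mpr ht)
  have hgrange : ∀ t, 0 ≤ g t ∧ g t ≤ 1 := by
    intro t
    by_cases h : t < δ/2
    · simp [hgdef, h]
    · have h0 : (0:ℝ) ≤ t := le_trans (by positivity) (not_lt.mp h)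
      rw [hgl t h0]
      exact ⟨(hrange t h0).1, (hrange t h0).2⟩
  have hgone_near : ∀ t, t < δ → g =ᶠ[nhds t] fun _ => 1 := fun t ht =>
    Filter.eventuallyEq_of_mem (Iio_mem_nhds ht) (fun s hs => hg1 s hs)
  have hgzero_near : ∀ t, 1 < t → g =ᶠ[nhds t] fun _ => 0 := fun t ht =>
    Filter.eventuallyEq_of_mem (Ioi_mem_nhds ht) (fun s hs => hg0 s (le_of_lt hs))
  have hgsm : ContDiff ℝ (⊤:ℕ∞) g := by
    rw [contDiff_iff_contDiffAt]
    intro t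
    rcases lt_or_ge t δ with ht | ht
    · exact contDiffAt_const.congr_of_eventuallyEq (hgone_near t ht)
    · have hpos : (0:ℝ) < t := lt_of_lt_of_le hδpos ht
      have h2 : ContDiffAt ℝ (⊤:ℕ∞) l t :=
        hl.contDiffAt (Filter.mem_of_superset (Ioi_mem_nhds hpos) Ioi_subset_Ici_self)
      have heq : g =ᶠ[nhds t] l := by
        apply Filter.eventuallyEq_of_mem (Ioi_mem_nhds (show δ/2 < t by linarith))
        intro s hs
        simp [hgdef, not_lt.mpr (le_of_lt (Set.mem_Ioi.mp hs))]
      exact h2.congr_of_eventuallyEq heq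
  have hdg_eq0 : ∀ t, t < δ ∨ 1 < t → deriv g t = 0 := by
    intro t ht
    rcases ht with ht | ht
    · rw [(hgone_near t ht).deriv_eq]; simp
    · rw [(hgzero_near t ht).deriv_eq]; simp
  have hddg_eq0 : ∀ t, t < δ ∨ 1 < t → deriv (deriv g) t = 0 := by
    intro t ht
    rcases ht with ht | ht
    · have h : deriv g =ᶠ[nhds t] fun _ => 0 :=
        Filter.eventuallyEq_of_mem (Iio_mem_nhds ht) (fun s hs => hdg_eq0 s (Or.inl hs))
      rw [h.deriv_eq]; simp
    · have h : deriv g =ᶠ[nhds t] fun _ => 0 :=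
        Filter.eventuallyEq_of_mem (Ioi_mem_nhds ht) (fun s hs => hdg_eq0 s (Or.inr hs))
      rw [h.deriv_eq]; simp
  have hg' : ContDiff ℝ (⊤:ℕ∞) (deriv g) := (contDiff_infty_iff_deriv.mp hgsm).2
  have hg'' : Continuous (deriv (deriv g)) :=
    ((contDiff_infty_iff_deriv.mp hg').2).continuous
  obtain ⟨M₁, hM₁⟩ := isCompact_Icc.exists_bound_of_continuousOn
    (f := deriv g) (s := Set.Icc (0:ℝ) 1) hg'.continuous.continuousOn
  obtain ⟨M₂, hM₂⟩ := isCompact_Icc.exists_bound_of_continuousOn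
    (f := deriv (deriv g)) (s := Set.Icc (0:ℝ) 1) hg''.continuousOn
  set M : ℝ := max (max M₁ M₂) 1 with hMdef
  have hM1 : (1:ℝ) ≤ M := le_max_right _ _
  have hMpos : (0:ℝ) < M := lt_of_lt_of_le one_pos hM1
  have hgd_le : ∀ t, |deriv g t| ≤ M := by
    intro t
    rcases lt_or_ge t δ with ht | ht
    · rw [hdg_eq0 t (Or.inl ht)]; simpa using le_of_lt hMpos
    · rcases le_or_gt t 1 with ht1 | ht1
      · have := hM₁ t ⟨le_trans (le_of_lt hδpos) ht, ht1⟩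
        rw [Real.norm_eq_abs] at this
        exact le_trans this (le_trans (le_max_left _ _) (le_max_left _ _))
      · rw [hdg_eq0 t (Or.inr ht1)]; simpa using le_of_lt hMpos
  have hgdd_le : ∀ t, |deriv (deriv g) t| ≤ M := by
    intro t
    rcases lt_or_ge t δ with ht | ht
    · rw [hddg_eq0 t (Or.inl ht)]; simpa using le_of_lt hMpos
    · rcases le_or_gt t 1 with ht1 | ht1
      · have := hM₂ t ⟨le_trans (le_of_lt hδpos) ht, ht1⟩
        rw [Real.norm_eq_abs] at this
        exact le_trans this (le_trans (le_max_right _ _) (le_max_left _ _))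
      · rw [hddg_eq0 t (Or.inr ht1)]; simpa using le_of_lt hMpos
  have hgrad : ∀ t, (deriv g t)^2 ≤ 2*M*g t :=
    grad_sq_le g hgsm M hMpos (fun t => (hgrange t).1) hgdd_le
  refine ⟨4*M*R^2 + 1, by positivity, ?_⟩
  intro z hz ξ
  set P : ℂ := inner ℂ z.1 ξ.1 with hPdef
  set Q : ℂ := inner ℂ z.2 ξ.2 with hQdef
  set A : ℝ := ‖z.1‖^2 with hAdef
  set D : ℝ := ‖ξ.1‖^2 with hDdef
  set E : ℝ := ‖z.2‖^2 with hEdef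
  set G : ℝ := ‖ξ.2‖^2 with hGdef
  -- rewrite the two inner functions
  have hn1 : ∀ x' : ℝ, ‖(z + ((x':ℂ)) • ξ).1‖^2 = A + (2*P.re)*x' + D*x'^2 := by
    intro x'
    have : (z + ((x':ℂ)) • ξ).1 = z.1 + ((x':ℂ)) • ξ.1 := rfl
    rw [this, normsq_add_real_smul]
  have hn2 : ∀ x' : ℝ, ‖(z + ((x':ℂ)) • ξ).2‖^2 = E + (2*Q.re)*x' + G*x'^2 := by
    intro x'
    have : (z + ((x':ℂ)) • ξ).2 = z.2 + ((x':ℂ)) • ξ.2 := rfl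
    rw [this, normsq_add_real_smul]
  have hn1' : ∀ x' : ℝ, ‖(z + ((x':ℂ) * Complex.I) • ξ).1‖^2
      = A + (-2*P.im)*x' + D*x'^2 := by
    intro x'
    have : (z + ((x':ℂ) * Complex.I) • ξ).1 = z.1 + ((x':ℂ) * Complex.I) • ξ.1 := rfl
    rw [this, normsq_add_realI_smul]
  have hn2' : ∀ x' : ℝ, ‖(z + ((x':ℂ) * Complex.I) • ξ).2‖^2
      = E + (-2*Q.im)*x' + G*x'^2 := by
    intro x'
    have : (z + ((x':ℂ) * Complex.I) • ξ).2 = z.2 + ((x':ℂ) * Complex.I) • ξ.2 := rfl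
    rw [this, normsq_add_realI_smul]
  have hfun1 : (fun x' : ℝ => l (‖(z + ((x':ℂ)) • ξ).1‖^2) * ‖(z + ((x':ℂ)) • ξ).2‖^2
        + (4*M*R^2+1) * ‖(z + ((x':ℂ)) • ξ).1‖^2)
      = fun x' : ℝ => g (A + (2*P.re)*x' + D*x'^2) * (E + (2*Q.re)*x' + G*x'^2)
        + (4*M*R^2+1)*(A + (2*P.re)*x' + D*x'^2) := by
    funext x'
    rw [hn1 x', hn2 x', ← hgl _ (by rw [← hn1 x']; positivity)]
  have hfun2 : (fun x' : ℝ => l (‖(z + ((x':ℂ) * Complex.I) • ξ).1‖^2)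
          * ‖(z + ((x':ℂ) * Complex.I) • ξ).2‖^2
        + (4*M*R^2+1) * ‖(z + ((x':ℂ) * Complex.I) • ξ).1‖^2)
      = fun x' : ℝ => g (A + (-2*P.im)*x' + D*x'^2) * (E + (-2*Q.im)*x' + G*x'^2)
        + (4*M*R^2+1)*(A + (-2*P.im)*x' + D*x'^2) := by
    funext x'
    rw [hn1' x', hn2' x', ← hgl _ (by rw [← hn1' x']; positivity)]
  have hL : leviForm (fun p => l (‖p.1‖ ^ 2) * ‖p.2‖ ^ 2 + (4*M*R^2+1) * ‖p.1‖ ^ 2) z ξ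
      = (1/4) * ((deriv (deriv g) A * (2*P.re)^2 * E + 2*D*(deriv g A)*E
            + 2*(2*P.re)*(deriv g A)*(2*Q.re) + 2*G*(g A) + 2*(4*M*R^2+1)*D)
        + (deriv (deriv g) A * (-2*P.im)^2 * E + 2*D*(deriv g A)*E
            + 2*(-2*P.im)*(deriv g A)*(-2*Q.im) + 2*G*(g A) + 2*(4*M*R^2+1)*D)) := by
    simp only [leviForm]
    rw [hfun1, hfun2, aux_second_deriv g hgsm, aux_second_deriv g hgsm]
  rw [hL]
  -- now the inequality
  have hA0 : 0 ≤ A := by positivity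
  have hD0 : 0 ≤ D := by positivity
  have hE0 : 0 ≤ E := by positivity
  have hG0 : 0 ≤ G := by positivity
  have hER : E ≤ R^2 := by
    rw [hEdef]
    have h := pow_lt_pow_left₀ hz (norm_nonneg z.2) (two_ne_zero)
    exact le_of_lt h
  have hPsq : P.re^2 + P.im^2 ≤ A * D := by
    have h := norm_inner_le_norm (𝕜:=ℂ) z.1 ξ.1
    have h2 : ‖P‖^2 = P.re^2 + P.im^2 := by
      rw [Complex.sq_norm, Complex.normSq_apply]; ring
    calc P.re^2 + P.im^2 = ‖P‖^2 := h2.symm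
      _ ≤ (‖z.1‖ * ‖ξ.1‖)^2 := pow_le_pow_left₀ (norm_nonneg _) h 2
      _ = A * D := by rw [hAdef, hDdef, mul_pow]
  have hQsq : Q.re^2 + Q.im^2 ≤ E * G := by
    have h := norm_inner_le_norm (𝕜:=ℂ) z.2 ξ.2
    have h2 : ‖Q‖^2 = Q.re^2 + Q.im^2 := by
      rw [Complex.sq_norm, Complex.normSq_apply]; ring
    calc Q.re^2 + Q.im^2 = ‖Q‖^2 := h2.symm
      _ ≤ (‖z.2‖ * ‖ξ.2‖)^2 := pow_le_pow_left₀ (norm_nonneg _) h 2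
      _ = E * G := by rw [hEdef, hGdef, mul_pow]
  rcases le_or_gt A 1 with hA1 | hA1
  · have hgdA := abs_le.mp (hgd_le A)
    have hgddA := abs_le.mp (hgdd_le A)
    exact final_ineq M R A D E G (g A) (deriv g A) (deriv (deriv g) A)
      P.re P.im Q.re Q.im hM1 hA0 hA1 hD0 hE0 hER hG0 (hgrange A).1 (hgrad A)
      hgdA.1 hgdA.2 hgddA.1 hgddA.2 hPsq hQsq
  · rw [hg0 A (le_of_lt hA1), hdg_eq0 A (Or.inr hA1), hddg_eq0 A (Or.inr hA1)]
    exact final_ineq0 M R D P.re P.im Q.re Q.im E G (le_of_lt hMpos) hD0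
end

section
/- Let λ : [0,∞) → [0,1] be smooth with {λ > 0} = [0,1) and λ ≡ 1 near 0. Then for every R > 0 there exist constants C > 0 and ε > 0 such that the complex Hessian of S(z₁,z') := λ(|z₁|²)·|z'|² + C·|z₁|² satisfies H_S(z,ξ) ≥ ε·(|ξ₁|² + λ(|z₁|²)·|ξ'|²) for all z ∈ ℂ × B(0,R) and all ξ = (ξ₁,ξ') ∈ ℂ × ℂ^{n-1}. In particular, S is strictly plurisubharmonic on 𝔻 × B(0,R). -/
open Complex Metric MeasureTheory Real Set

set_option maxHeartbeats 1000000

local notation "⟪" x ", " y "⟫" => @inner ℂ _ _ x y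

lemma quad_hasDerivAt (A B D : ℝ) (x : ℝ) :
    HasDerivAt (fun x : ℝ => A + B*x + D*x^2) (B + 2*D*x) x := by
  have h := ((hasDerivAt_const x A).add ((hasDerivAt_id x).const_mul B)).add
      (((hasDerivAt_pow 2 x)).const_mul D)
  refine HasDerivAt.congr_deriv h ?_
  push_cast
  ring

lemma second_deriv_comp (L : ℝ → ℝ) (hL : ContDiff ℝ (⊤ : ℕ∞) L) (A B D E F G C : ℝ) :
    deriv (deriv (fun x : ℝ => L (A + B*x + D*x^2) * (E + F*x + G*x^2) + C*(A + B*x + D*x^2))) 0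
    = deriv (deriv L) A * B^2 * E + deriv L A * (2*D*E + 2*B*F) + L A * (2*G) + C*(2*D) := by
  have hLd : Differentiable ℝ L := hL.differentiable (by norm_cast)
  have hL' : ContDiff ℝ (⊤ : ℕ∞) (deriv L) := (contDiff_infty_iff_deriv.mp hL).2
  have hLd' : Differentiable ℝ (deriv L) := hL'.differentiable (by norm_cast)
  set q : ℝ → ℝ := fun x => A + B*x + D*x^2 with hq
  set r : ℝ → ℝ := fun x => E + F*x + G*x^2 with hr
  have H : ∀ x : ℝ, HasDerivAt (fun x => L (q x) * r x + C * q x)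
      (deriv L (q x) * (B + 2*D*x) * r x + L (q x) * (F + 2*G*x) + C*(B + 2*D*x)) x := by
    intro x
    have h1 : HasDerivAt (fun x => L (q x)) (deriv L (q x) * (B + 2*D*x)) x :=
      (hLd (q x)).hasDerivAt.comp x (quad_hasDerivAt A B D x)
    exact ((h1.mul (quad_hasDerivAt E F G x)).add ((quad_hasDerivAt A B D x).const_mul C))
  have hde : deriv (fun x => L (q x) * r x + C * q x)
      = fun x => deriv L (q x) * (B + 2*D*x) * r x + L (q x) * (F + 2*G*x) + C*(B + 2*D*x) := by
    funext x; exact (H x).deriv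
  rw [hde]
  have h2 : HasDerivAt (fun x => deriv L (q x) * (B + 2*D*x) * r x + L (q x) * (F + 2*G*x) + C*(B + 2*D*x))
      (((deriv (deriv L) (q 0) * (B + 2*D*0)) * (B + 2*D*0) + deriv L (q 0) * (2*D)) * r 0
        + deriv L (q 0) * (B+2*D*0) * (F + 2*G*0)
        + (deriv L (q 0) * (B + 2*D*0) * (F + 2*G*0) + L (q 0) * (2*G)) + C*(2*D)) 0 := by
    have hq0 := quad_hasDerivAt A B D 0
    have hBD : ∀ x : ℝ, HasDerivAt (fun x : ℝ => B + 2*D*x) (2*D) x := by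
      intro x
      have := ((hasDerivAt_id x).const_mul (2*D)).const_add B
      simpa using this
    have hFG : ∀ x : ℝ, HasDerivAt (fun x : ℝ => F + 2*G*x) (2*G) x := by
      intro x
      have := ((hasDerivAt_id x).const_mul (2*G)).const_add F
      simpa using this
    have hA : HasDerivAt (fun x => deriv L (q x)) (deriv (deriv L) (q 0) * (B + 2*D*0)) 0 :=
      (hLd' (q 0)).hasDerivAt.comp 0 hq0
    exact (((hA.mul (hBD 0)).mul (quad_hasDerivAt E F G 0)).add
        (((hLd (q 0)).hasDerivAt.comp 0 hq0).mul (hFG 0))).add ((hBD 0).const_mul C)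
  rw [h2.deriv]
  have hq0' : q 0 = A := by simp [q]
  have hr0 : r 0 = E := by simp [r]
  rw [hq0', hr0]; ring

lemma norm_expand {E : Type*} [NormedAddCommGroup E] [InnerProductSpace ℂ E] (u v : E) (x : ℝ) :
    ‖u + (x:ℂ) • v‖^2 = ‖u‖^2 + (2 * Complex.re ⟪u, v⟫)*x + ‖v‖^2 * x^2 := by
  rw [@norm_add_sq ℂ, inner_smul_right, norm_smul]
  simp [Complex.mul_re]
  rw [mul_pow, _root_.sq_abs x]
  ring

lemma levi_line (L : ℝ → ℝ) (hL : ContDiff ℝ (⊤ : ℕ∞) L) (C : ℝ) {m : ℕ}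
    (z v : ℂ × EuclideanSpace ℂ (Fin m)) :
    deriv (deriv (fun x : ℝ => L (‖(z + (x:ℂ) • v).1‖^2) * ‖(z + (x:ℂ) • v).2‖^2
        + C * ‖(z + (x:ℂ) • v).1‖^2)) 0
    = deriv (deriv L) (‖z.1‖^2) * (2 * Complex.re ⟪z.1, v.1⟫)^2 * ‖z.2‖^2
      + deriv L (‖z.1‖^2) * (2*‖v.1‖^2*‖z.2‖^2 + 2*(2 * Complex.re ⟪z.1, v.1⟫)*(2 * Complex.re ⟪z.2, v.2⟫))
      + L (‖z.1‖^2) * (2*‖v.2‖^2) + C*(2*‖v.1‖^2) := by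
  have key : (fun x : ℝ => L (‖(z + (x:ℂ) • v).1‖^2) * ‖(z + (x:ℂ) • v).2‖^2
        + C * ‖(z + (x:ℂ) • v).1‖^2)
      = fun x : ℝ => L (‖z.1‖^2 + (2 * Complex.re ⟪z.1, v.1⟫)*x + ‖v.1‖^2*x^2)
          * (‖z.2‖^2 + (2 * Complex.re ⟪z.2, v.2⟫)*x + ‖v.2‖^2*x^2)
          + C * (‖z.1‖^2 + (2 * Complex.re ⟪z.1, v.1⟫)*x + ‖v.1‖^2*x^2) := by
    funext x
    have h1 : (z + (x:ℂ) • v).1 = z.1 + (x:ℂ) • v.1 := rfl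
    have h2 : (z + (x:ℂ) • v).2 = z.2 + (x:ℂ) • v.2 := rfl
    rw [h1, h2, norm_expand, norm_expand]
  rw [key]
  exact second_deriv_comp L hL _ _ _ _ _ _ _

lemma leviForm_formula (L : ℝ → ℝ) (hL : ContDiff ℝ (⊤ : ℕ∞) L) (C : ℝ) {m : ℕ}
    (z ξ : ℂ × EuclideanSpace ℂ (Fin m)) :
    leviForm (fun p => L (‖p.1‖^2) * ‖p.2‖^2 + C * ‖p.1‖^2) z ξ
    = deriv (deriv L) (‖z.1‖^2) * ((Complex.re ⟪z.1, ξ.1⟫)^2 + (Complex.im ⟪z.1, ξ.1⟫)^2) * ‖z.2‖^2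
      + deriv L (‖z.1‖^2) * (‖ξ.1‖^2*‖z.2‖^2
          + 2*(Complex.re ⟪z.1, ξ.1⟫ * Complex.re ⟪z.2, ξ.2⟫
               + Complex.im ⟪z.1, ξ.1⟫ * Complex.im ⟪z.2, ξ.2⟫))
      + L (‖z.1‖^2) * ‖ξ.2‖^2 + C*‖ξ.1‖^2 := by
  have h1 := levi_line L hL C z ξ
  have h2 := levi_line L hL C z (Complex.I • ξ)
  have e1 : ∀ y' : ℝ, ((y' : ℂ) * Complex.I) • ξ = (y' : ℂ) • (Complex.I • ξ) := by
    intro y'; rw [smul_smul]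
  have hfst : (Complex.I • ξ).1 = Complex.I • ξ.1 := rfl
  have hsnd : (Complex.I • ξ).2 = Complex.I • ξ.2 := rfl
  have hn1 : ‖(Complex.I • ξ).1‖ = ‖ξ.1‖ := by rw [hfst, norm_smul]; simp
  have hn2 : ‖(Complex.I • ξ).2‖ = ‖ξ.2‖ := by rw [hsnd, norm_smul]; simp
  have hre1 : Complex.re ⟪z.1, (Complex.I • ξ).1⟫ = -Complex.im ⟪z.1, ξ.1⟫ := by
    rw [hfst, inner_smul_right]; simp
  have hre2 : Complex.re ⟪z.2, (Complex.I • ξ).2⟫ = -Complex.im ⟪z.2, ξ.2⟫ := by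
    rw [hsnd, inner_smul_right]; simp
  rw [hn1, hn2, hre1, hre2] at h2
  unfold leviForm
  simp only [e1]
  rw [h1, h2]
  ring

lemma glaeser_aux (L : ℝ → ℝ) (hL : ContDiff ℝ (⊤ : ℕ∞) L) (K : ℝ) (hK : 0 < K)
    (hnn : ∀ t, 0 ≤ L t) (hbd : ∀ t, |deriv (deriv L) t| ≤ K) (a : ℝ) :
    (deriv L a)^2 ≤ 4*K*L a := by
  have hLd : Differentiable ℝ L := hL.differentiable (by norm_cast)
  have hL' : ContDiff ℝ (⊤ : ℕ∞) (deriv L) := (contDiff_infty_iff_deriv.mp hL).2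
  have hLd' : Differentiable ℝ (deriv L) := hL'.differentiable (by norm_cast)
  set h : ℝ := -(deriv L a)/(2*K) with hh
  have hLip : ∀ x y : ℝ, |deriv L y - deriv L x| ≤ K * |y - x| := by
    intro x y
    have := Convex.norm_image_sub_le_of_norm_deriv_le (f := deriv L) (s := univ)
      (fun x _ => hLd' x) (fun x _ => by simpa using hbd x) convex_univ (mem_univ x) (mem_univ y)
    simpa [Real.norm_eq_abs] using this
  set g : ℝ → ℝ := fun x => L x - (x - a) * deriv L a with hg
  have hgd : ∀ x, HasDerivAt g (deriv L x - deriv L a) x := by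
    intro x
    have h1 : HasDerivAt (fun x : ℝ => (x - a) * deriv L a) (deriv L a) x := by
      simpa using ((hasDerivAt_id x).sub_const a).mul_const (deriv L a)
    exact (hLd x).hasDerivAt.sub h1
  have key : |L (a+h) - h * deriv L a - L a| ≤ K * h^2 := by
    have hs : Convex ℝ (uIcc a (a+h)) := convex_uIcc _ _
    have hbound : ∀ x ∈ uIcc a (a+h), ‖deriv g x‖ ≤ K * |h| := by
      intro x hx
      rw [(hgd x).deriv, Real.norm_eq_abs]
      have h1 : |x - a| ≤ |h| := by
        rw [uIcc_eq_union] at hx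
        rcases hx with hx | hx <;> rw [abs_le] <;> rcases hx with ⟨h1, h2⟩ <;>
          constructor <;> cases abs_cases h <;> linarith
      calc |deriv L x - deriv L a| ≤ K * |x - a| := hLip a x
        _ ≤ K * |h| := by nlinarith
    have := Convex.norm_image_sub_le_of_norm_deriv_le (f := g) (s := uIcc a (a+h))
      (fun x _ => (hgd x).differentiableAt) hbound hs left_mem_uIcc right_mem_uIcc
    have e1 : g (a+h) - g a = L (a+h) - h * deriv L a - L a := by simp [g]
    rw [e1] at this
    have e2 : ‖a + h - a‖ = |h| := by simp
    rw [e2, Real.norm_eq_abs] at this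
    calc |L (a+h) - h * deriv L a - L a| ≤ K * |h| * |h| := this
      _ = K * h^2 := by rw [mul_assoc, ← abs_mul, abs_mul_self]; ring
  have key2 : 0 ≤ L a + h * deriv L a + K * h^2 := by
    have h0 := hnn (a+h)
    have := (abs_le.mp key).2
    linarith
  have hh2 : deriv L a = -(2*K*h) := by
    rw [hh]; field_simp
  rw [hh2]
  rw [hh2] at key2
  nlinarith [key2, hK, sq_nonneg h]

lemma amgm_aux (X a b : ℝ) (ha : 0 ≤ a) (hb : 0 ≤ b) (h : X^2 ≤ a*b) : -((a+b)/2) ≤ X := by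
  nlinarith [sq_nonneg (a-b), sq_nonneg (2*X + a + b)]

lemma cs_aux (p q u w : ℝ) : (p*u+q*w)^2 ≤ (p^2+q^2)*(u^2+w^2) := by
  nlinarith [sq_nonneg (p*w-q*u)]

lemma estimate_aux (K₁ K₂ R A D E G p q u w L0 L1 L2 : ℝ)
    (hK₁ : 0 < K₁) (hK₂ : 0 < K₂)
    (hA : 0 ≤ A) (hD : 0 ≤ D) (hE : 0 ≤ E) (hG : 0 ≤ G) (hER : E ≤ R^2)
    (hpq : p^2 + q^2 ≤ A*D) (huw : u^2 + w^2 ≤ E*G)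
    (hL0nn : 0 ≤ L0) (hb1 : |L1| ≤ K₁) (hb2A : |L2| * A ≤ K₂)
    (hg : L1^2 * A ≤ 4*K₂*L0) :
    (1/2) * (D + L0*G) ≤
      L2*(p^2+q^2)*E + L1*(D*E + 2*(p*u+q*w)) + L0*G + ((9*K₂+K₁)*R^2+1)*D := by
  have hR2 : (0:ℝ) ≤ R^2 := sq_nonneg R
  have hpq0 : 0 ≤ p^2 + q^2 := by positivity
  have huw0 : 0 ≤ u^2 + w^2 := by positivity
  have hDE : 0 ≤ D*E := mul_nonneg hD hE
  have hKRD2 : 0 ≤ K₂*R^2*D := by positivity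
  have T1 : -(K₂*R^2*D) ≤ L2*(p^2+q^2)*E := by
    rcases le_or_gt 0 L2 with h | h
    · have h0 : 0 ≤ L2*(p^2+q^2)*E := by positivity
      linarith
    · have h1 : L2*(A*D) ≤ L2*(p^2+q^2) := mul_le_mul_of_nonpos_left hpq h.le
      have h2 : -K₂ ≤ L2*A := by
        rw [abs_of_neg h] at hb2A; nlinarith
      have h4 : -K₂ * (D*E) ≤ (L2*A)*(D*E) := mul_le_mul_of_nonneg_right h2 hDE
      have h5 : L2*(A*D)*E ≤ L2*(p^2+q^2)*E := mul_le_mul_of_nonneg_right h1 hE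
      have h6 : K₂*(D*E) ≤ K₂*(D*R^2) := by nlinarith [mul_nonneg hK₂.le hD]
      nlinarith [h4, h5, h6]
  have T2 : -(K₁*R^2*D) ≤ L1*(D*E) := by
    have h1 : -K₁ ≤ L1 := by linarith [neg_abs_le L1]
    have h4 : -K₁ * (D*E) ≤ L1*(D*E) := mul_le_mul_of_nonneg_right h1 hDE
    have h6 : K₁*(D*E) ≤ K₁*(D*R^2) := by nlinarith [mul_nonneg hK₁.le hD]
    nlinarith [h4, h6]
  have T3 : -(8*K₂*R^2*D + L0*G/2) ≤ L1*(2*(p*u+q*w)) := by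
    have hCS : (p*u+q*w)^2 ≤ (p^2+q^2)*(u^2+w^2) := cs_aux p q u w
    have c1 : (p^2+q^2)*(u^2+w^2) ≤ (A*D)*(E*G) := mul_le_mul hpq huw huw0 (mul_nonneg hA hD)
    have c2 : (p*u+q*w)^2 ≤ (A*D)*(E*G) := le_trans hCS c1
    have hX2 : (L1*(2*(p*u+q*w)))^2 ≤ (16*K₂*R^2*D)*(L0*G) := by
      have s2 : 4*L1^2*(p*u+q*w)^2 ≤ 4*L1^2*((A*D)*(E*G)) := by
        have := mul_le_mul_of_nonneg_left c2 (show (0:ℝ) ≤ 4*L1^2 by positivity)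
        linarith
      have s4 : (L1^2*A)*(4*(D*(E*G))) ≤ (4*K₂*L0)*(4*(D*(E*G))) :=
        mul_le_mul_of_nonneg_right hg (by positivity)
      have s5 : (4*K₂*L0)*(4*(D*(E*G))) ≤ (16*K₂*R^2*D)*(L0*G) := by
        have h := mul_le_mul_of_nonneg_left hER (show (0:ℝ) ≤ 16*K₂*L0*D*G by positivity)
        nlinarith [h]
      nlinarith [s2, s4, s5]
    have := amgm_aux (L1*(2*(p*u+q*w))) (16*K₂*R^2*D) (L0*G) (by positivity)
      (mul_nonneg hL0nn hG) hX2
    linarith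
  nlinarith [T1, T2, T3, mul_nonneg hL0nn hG, hD]
theorem stmt_2 (m : ℕ) (l : ℝ → ℝ)
    (hl : ContDiffOn ℝ (⊤ : ℕ∞) l (Set.Ici 0))
    (hrange : ∀ t : ℝ, 0 ≤ t → l t ∈ Set.Icc (0:ℝ) 1)
    (hsupp : ∀ t : ℝ, 0 ≤ t → (0 < l t ↔ t < 1))
    (hone : ∃ δ : ℝ, 0 < δ ∧ ∀ t ∈ Set.Ico (0:ℝ) δ, l t = 1) (R : ℝ) (hR : 0 < R) :
    ∃ C : ℝ, 0 < C ∧ ∃ ε : ℝ, 0 < ε ∧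
      (∀ z : ℂ × EuclideanSpace ℂ (Fin m), ‖z.2‖ < R →
        ∀ ξ : ℂ × EuclideanSpace ℂ (Fin m),
          ε * (‖ξ.1‖ ^ 2 + l (‖z.1‖ ^ 2) * ‖ξ.2‖ ^ 2) ≤
            leviForm (fun p => l (‖p.1‖ ^ 2) * ‖p.2‖ ^ 2 + C * ‖p.1‖ ^ 2) z ξ) ∧
      (∀ z : ℂ × EuclideanSpace ℂ (Fin m), ‖z.1‖ < 1 → ‖z.2‖ < R →
        ∀ ξ : ℂ × EuclideanSpace ℂ (Fin m), ξ ≠ 0 →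
          0 < leviForm (fun p => l (‖p.1‖ ^ 2) * ‖p.2‖ ^ 2 + C * ‖p.1‖ ^ 2) z ξ) := by
  
  obtain ⟨δ, hδ, honeδ⟩ := hone
  have hδ1 : δ ≤ 1 := by
    by_contra hcon
    push_neg at hcon
    have h1 : l 1 = 1 := honeδ 1 ⟨zero_le_one, hcon⟩
    have h2 := hsupp 1 zero_le_one
    rw [h1] at h2
    exact absurd (h2.mp one_pos) (lt_irrefl 1)
  have hl0 : ∀ t, 1 ≤ t → l t = 0 := by
    intro t ht
    have h0 : (0:ℝ) ≤ t := le_trans zero_le_one ht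
    have h1 : ¬ 0 < l t := by rw [hsupp t h0]; exact not_lt.mpr ht
    exact le_antisymm (not_lt.mp h1) (hrange t h0).1
  set L : ℝ → ℝ := fun t => if t < δ then 1 else l t with hLdef
  have hL1 : ∀ t, t < δ → L t = 1 := fun t ht => if_pos ht
  have hLl : ∀ t, 0 ≤ t → L t = l t := by
    intro t ht
    by_cases h : t < δ
    · rw [hL1 t h]; exact (honeδ t ⟨ht, h⟩).symm
    · simp only [L, if_neg h]
  have hL0 : ∀ t, 1 < t → L t = 0 := by
    intro t ht
    have h : ¬ t < δ := not_lt.mpr (le_of_lt (lt_of_le_of_lt hδ1 ht))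
    simp only [L, if_neg h]
    exact hl0 t ht.le
  have hLnn : ∀ t, 0 ≤ L t := by
    intro t
    by_cases h : t < δ
    · rw [hL1 t h]; norm_num
    · simp only [L, if_neg h]
      exact (hrange t (le_trans hδ.le (not_lt.mp h))).1
  have hLsmooth : ContDiff ℝ (⊤ : ℕ∞) L := by
    rw [contDiff_iff_contDiffAt]
    intro x
    rcases lt_or_ge x δ with hx | hx
    · have heq : (fun _ : ℝ => (1:ℝ)) =ᶠ[nhds x] L := by
        filter_upwards [Iio_mem_nhds hx] with t ht
        exact (hL1 t (mem_Iio.mp ht)).symm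
      exact contDiffAt_const.congr_of_eventuallyEq heq.symm
    · have hx0 : 0 < x := lt_of_lt_of_le hδ hx
      have h1 : ContDiffAt ℝ (⊤ : ℕ∞) l x := hl.contDiffAt (Ici_mem_nhds hx0)
      have heq : l =ᶠ[nhds x] L := by
        filter_upwards [Ioi_mem_nhds hx0] with t ht
        exact (hLl t (le_of_lt (mem_Ioi.mp ht))).symm
      exact h1.congr_of_eventuallyEq heq.symm
  have hder0 : ∀ (c : ℝ) (s : Set ℝ), IsOpen s → (∀ x ∈ s, L x = c) →
      ∀ t ∈ s, deriv L t = 0 ∧ deriv (deriv L) t = 0 := by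
    intro c s hs hc
    have hd1 : ∀ t ∈ s, deriv L t = 0 := by
      intro t ht
      have heq : L =ᶠ[nhds t] fun _ => c := by
        filter_upwards [hs.mem_nhds ht] with y hy using hc y hy
      rw [heq.deriv_eq, deriv_const]
    intro t ht
    refine ⟨hd1 t ht, ?_⟩
    have heq : deriv L =ᶠ[nhds t] fun _ => (0:ℝ) := by
      filter_upwards [hs.mem_nhds ht] with y hy using hd1 y hy
    rw [heq.deriv_eq, deriv_const]
  have hlow := fun t (ht : t < δ) => hder0 1 (Iio δ) isOpen_Iio (fun x hx => hL1 x hx) t ht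
  have hhigh := fun t (ht : 1 < t) => hder0 0 (Ioi 1) isOpen_Ioi (fun x hx => hL0 x hx) t ht
  have hL' : ContDiff ℝ (⊤ : ℕ∞) (deriv L) := (contDiff_infty_iff_deriv.mp hLsmooth).2
  have hL'' : ContDiff ℝ (⊤ : ℕ∞) (deriv (deriv L)) := (contDiff_infty_iff_deriv.mp hL').2
  obtain ⟨t₁, ht₁mem, hmax₁'⟩ := (isCompact_Icc (a := (0:ℝ)) (b := 1)).exists_isMaxOn
    ⟨0, by norm_num⟩ (hL'.continuous.abs.continuousOn)
  obtain ⟨t₂, ht₂mem, hmax₂'⟩ := (isCompact_Icc (a := (0:ℝ)) (b := 1)).exists_isMaxOn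
    ⟨0, by norm_num⟩ (hL''.continuous.abs.continuousOn)
  have hmax₁ := isMaxOn_iff.mp hmax₁'
  have hmax₂ := isMaxOn_iff.mp hmax₂'
  set K₁ : ℝ := |deriv L t₁| + 1 with hK₁def
  set K₂ : ℝ := |deriv (deriv L) t₂| + 1 with hK₂def
  have hK₁pos : 0 < K₁ := by positivity
  have hK₂pos : 0 < K₂ := by positivity
  have hb1 : ∀ t, |deriv L t| ≤ K₁ := by
    intro t
    rcases lt_or_ge t δ with h | h
    · rw [(hlow t h).1, abs_zero]; positivity
    · rcases le_or_gt t 1 with h2 | h2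
      · have := hmax₁ t ⟨le_trans hδ.le h, h2⟩
        calc |deriv L t| ≤ |deriv L t₁| := this
          _ ≤ K₁ := by rw [hK₁def]; linarith
      · rw [(hhigh t h2).1, abs_zero]; positivity
  have hb2 : ∀ t, |deriv (deriv L) t| ≤ K₂ := by
    intro t
    rcases lt_or_ge t δ with h | h
    · rw [(hlow t h).2, abs_zero]; positivity
    · rcases le_or_gt t 1 with h2 | h2
      · have := hmax₂ t ⟨le_trans hδ.le h, h2⟩
        calc |deriv (deriv L) t| ≤ |deriv (deriv L) t₂| := this
          _ ≤ K₂ := by rw [hK₂def]; linarith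
      · rw [(hhigh t h2).2, abs_zero]; positivity
  have hGl : ∀ a, (deriv L a)^2 ≤ 4*K₂*L a :=
    fun a => glaeser_aux L hLsmooth K₂ hK₂pos hLnn hb2 a
  have hc2sq : ∀ c : ℂ, c.re^2 + c.im^2 = ‖c‖^2 := by
    intro c
    rw [Complex.sq_norm, Complex.normSq_apply]
    ring
  have main : ∀ z : ℂ × EuclideanSpace ℂ (Fin m), ‖z.2‖ < R →
      ∀ ξ : ℂ × EuclideanSpace ℂ (Fin m),
      (1/2 : ℝ) * (‖ξ.1‖^2 + l (‖z.1‖^2) * ‖ξ.2‖^2) ≤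
        leviForm (fun p => l (‖p.1‖^2) * ‖p.2‖^2 + ((9*K₂+K₁)*R^2+1)*‖p.1‖^2) z ξ := by
    intro z hz ξ
    have hfun : (fun p : ℂ × EuclideanSpace ℂ (Fin m) =>
        l (‖p.1‖^2) * ‖p.2‖^2 + ((9*K₂+K₁)*R^2+1)*‖p.1‖^2)
        = fun p => L (‖p.1‖^2) * ‖p.2‖^2 + ((9*K₂+K₁)*R^2+1)*‖p.1‖^2 := by
      funext p; rw [hLl _ (sq_nonneg _)]
    rw [hfun, leviForm_formula L hLsmooth ((9*K₂+K₁)*R^2+1) z ξ,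
      ← hLl _ (sq_nonneg ‖z.1‖)]
    have hER : ‖z.2‖^2 ≤ R^2 := by
      have := pow_le_pow_left₀ (norm_nonneg z.2) hz.le 2
      exact this
    have hpq : (Complex.re ⟪z.1, ξ.1⟫)^2 + (Complex.im ⟪z.1, ξ.1⟫)^2 ≤ ‖z.1‖^2 * ‖ξ.1‖^2 := by
      rw [hc2sq]
      calc ‖⟪z.1, ξ.1⟫‖^2 ≤ (‖z.1‖ * ‖ξ.1‖)^2 :=
            pow_le_pow_left₀ (norm_nonneg _) (norm_inner_le_norm z.1 ξ.1) 2
        _ = ‖z.1‖^2 * ‖ξ.1‖^2 := by ring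
    have huw : (Complex.re ⟪z.2, ξ.2⟫)^2 + (Complex.im ⟪z.2, ξ.2⟫)^2 ≤ ‖z.2‖^2 * ‖ξ.2‖^2 := by
      rw [hc2sq]
      calc ‖⟪z.2, ξ.2⟫‖^2 ≤ (‖z.2‖ * ‖ξ.2‖)^2 :=
            pow_le_pow_left₀ (norm_nonneg _) (norm_inner_le_norm z.2 ξ.2) 2
        _ = ‖z.2‖^2 * ‖ξ.2‖^2 := by ring
    have hb2A : |deriv (deriv L) (‖z.1‖^2)| * ‖z.1‖^2 ≤ K₂ := by
      rcases le_or_gt (‖z.1‖^2) 1 with h | h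
      · calc |deriv (deriv L) (‖z.1‖^2)| * ‖z.1‖^2 ≤ K₂ * 1 :=
            mul_le_mul (hb2 _) h (sq_nonneg _) hK₂pos.le
          _ = K₂ := mul_one K₂
      · rw [(hhigh _ h).2, abs_zero, zero_mul]; positivity
    have hg : (deriv L (‖z.1‖^2))^2 * ‖z.1‖^2 ≤ 4*K₂*L (‖z.1‖^2) := by
      rcases le_or_gt (‖z.1‖^2) 1 with h | h
      · nlinarith [hGl (‖z.1‖^2), sq_nonneg (deriv L (‖z.1‖^2)), sq_nonneg ‖z.1‖]
      · rw [(hhigh _ h).1]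
        have := hLnn (‖z.1‖^2)
        nlinarith
    exact estimate_aux K₁ K₂ R (‖z.1‖^2) (‖ξ.1‖^2) (‖z.2‖^2) (‖ξ.2‖^2)
      (Complex.re ⟪z.1, ξ.1⟫) (Complex.im ⟪z.1, ξ.1⟫)
      (Complex.re ⟪z.2, ξ.2⟫) (Complex.im ⟪z.2, ξ.2⟫)
      (L (‖z.1‖^2)) (deriv L (‖z.1‖^2)) (deriv (deriv L) (‖z.1‖^2))
      hK₁pos hK₂pos (sq_nonneg _) (sq_nonneg _) (sq_nonneg _) (sq_nonneg _)
      hER hpq huw (hLnn _) (hb1 _) hb2A hg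
  refine ⟨(9*K₂+K₁)*R^2+1, by positivity, 1/2, by norm_num, fun z hz ξ => main z hz ξ, ?_⟩
  intro z hz1 hz2 ξ hξ
  have h := main z hz2 ξ
  have hA1 : ‖z.1‖^2 < 1 := by
    have := pow_lt_one₀ (norm_nonneg z.1) hz1 (two_ne_zero)
    exact this
  have hlA : 0 < l (‖z.1‖^2) := (hsupp _ (sq_nonneg _)).mpr hA1
  have hne : ξ.1 ≠ 0 ∨ ξ.2 ≠ 0 := by
    by_contra hcon
    push_neg at hcon
    exact hξ (Prod.ext_iff.mpr ⟨hcon.1, hcon.2⟩)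
  refine lt_of_lt_of_le ?_ h
  rcases hne with h1 | h2
  · have hp : 0 < ‖ξ.1‖^2 := pow_pos (norm_pos_iff.mpr h1) 2
    have h2 : 0 ≤ l (‖z.1‖^2) * ‖ξ.2‖^2 := mul_nonneg hlA.le (sq_nonneg _)
    linarith
  · have hp : 0 < l (‖z.1‖^2) * ‖ξ.2‖^2 := mul_pos hlA (pow_pos (norm_pos_iff.mpr h2) 2)
    have h3 : 0 ≤ ‖ξ.1‖^2 := sq_nonneg _
    linarith
end

section
/- Let {θ_j} be dense in [0,2π] and a_j := (1+1/j)e^{iθ_j}. There exists a continuous subharmonic function u : ℂ → ℝ such that u(a_j) = 1 for every j ∈ ℕ and u(z) = |z|² for all z in the closed unit disc 𝔻̄. -/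
open Complex Metric MeasureTheory Real Set

namespace SH8

instance contAdd2 : ContinuousAdd (ℂ →L[ℝ] ℂ →L[ℝ] ℝ) := by
  exact @IsTopologicalAddGroup.toContinuousAdd _ _ ContinuousLinearMap.addCommGroup.toAddGroup
    ContinuousLinearMap.topologicalAddGroup

noncomputable def e (θ : ℝ) : ℂ := Complex.exp (θ * Complex.I)

lemma continuous_e : Continuous e := by unfold e; fun_prop

lemma norm_e (θ : ℝ) : ‖e θ‖ = 1 := by
  rw [e]; exact Complex.norm_exp_ofReal_mul_I θ

lemma hasDerivAt_e (θ : ℝ) : HasDerivAt e (Complex.I * e θ) θ := by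
  unfold e
  have h1 : HasDerivAt (fun θ : ℝ => (θ : ℂ) * Complex.I) Complex.I θ := by
    simpa using (Complex.ofRealCLM.hasDerivAt (x := θ)).mul_const Complex.I
  have h2 := (Complex.hasDerivAt_exp ((θ:ℂ) * Complex.I)).scomp θ h1
  simpa [mul_comm, Function.comp_def] using h2

lemma e_two_pi : e (2 * Real.pi) = e 0 := by
  unfold e; simp [Complex.ofReal_mul, Complex.exp_two_pi_mul_I]

lemma continuous_norm2 {X : Type*} [TopologicalSpace X] {g : X → ℂ →L[ℝ] ℂ →L[ℝ] ℝ}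
    (h : Continuous g) : Continuous fun z => ‖g z‖ := by
  have he : @Norm.norm (ℂ →L[ℝ] ℂ →L[ℝ] ℝ) ContinuousLinearMap.hasOpNorm =
      @Norm.norm (ℂ →L[ℝ] ℂ →L[ℝ] ℝ) SeminormedAddGroup.toNorm := rfl
  rw [he]; exact h.norm

section lemA

variable {f : ℂ → ℝ} {f1 : ℂ → ℂ →L[ℝ] ℝ} {f2 : ℂ → ℂ →L[ℝ] ℂ →L[ℝ] ℝ}

/-- The main sub-mean-value lemma for functions with full second-derivative data and
nonnegative Laplacian. -/
theorem submean_of_data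
    (h1 : ∀ z, HasFDerivAt f (f1 z) z) (h2 : ∀ z, HasFDerivAt f1 (f2 z) z)
    (hc2 : Continuous f2)
    (hlap : ∀ z, 0 ≤ f2 z 1 1 + f2 z Complex.I Complex.I)
    (z₀ : ℂ) (R : ℝ) (hR : 0 < R) : f z₀ ≤ cAvg f z₀ R := by
  have hdf : Differentiable ℝ f := fun z => (h1 z).differentiableAt
  have hdf1 : Differentiable ℝ f1 := fun z => (h2 z).differentiableAt
  have hcf : Continuous f := hdf.continuous
  have hcf1 : Continuous f1 := hdf1.continuous
  set γ : ℝ → ℝ → ℂ := fun ρ θ => z₀ + (ρ : ℂ) * e θ with hγ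
  have hγcont : ∀ ρ, Continuous (γ ρ) := fun ρ => by
    apply continuous_const.add (continuous_const.mul continuous_e)
  have hγρ : ∀ ρ θ, HasDerivAt (fun ρ : ℝ => γ ρ θ) (e θ) ρ := by
    intro ρ θ
    simpa [hγ] using ((Complex.ofRealCLM.hasDerivAt (x := ρ)).mul_const (e θ)).const_add z₀
  have hγθ : ∀ ρ θ, HasDerivAt (fun θ : ℝ => γ ρ θ) ((ρ : ℂ) * (Complex.I * e θ)) θ := by
    intro ρ θ
    exact (((hasDerivAt_e θ).const_mul (ρ:ℂ)).const_add z₀)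
  set A : ℝ → ℝ := fun ρ => ∫ θ in (0:ℝ)..(2*Real.pi), f (γ ρ θ) with hA
  set B : ℝ → ℝ := fun ρ => ∫ θ in (0:ℝ)..(2*Real.pi), f1 (γ ρ θ) (e θ) with hB
  set Cc : ℝ → ℝ := fun ρ => ∫ θ in (0:ℝ)..(2*Real.pi), f2 (γ ρ θ) (e θ) (e θ) with hCc
  -- boundedness helpers
  have bound1 : ∀ ρ₀ : ℝ, ∃ K, ∀ θ : ℝ, ∀ ρ ∈ Metric.ball ρ₀ 1, ‖f1 (γ ρ θ) (e θ)‖ ≤ K := by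
    intro ρ₀
    obtain ⟨K, hK⟩ := (isCompact_closedBall z₀ (|ρ₀|+1)).exists_bound_of_continuousOn
      hcf1.continuousOn
    refine ⟨K, fun θ ρ hρ => ?_⟩
    have hmem : γ ρ θ ∈ Metric.closedBall z₀ (|ρ₀|+1) := by
      rw [Metric.mem_closedBall, dist_eq_norm]
      have : ‖γ ρ θ - z₀‖ = |ρ| := by
        simp [hγ, e, norm_mul, Complex.norm_real, Real.norm_eq_abs,
          Complex.norm_exp_ofReal_mul_I]
      rw [this]
      have := abs_sub_abs_le_abs_sub ρ ρ₀
      have h' : |ρ - ρ₀| < 1 := by simpa [Real.dist_eq] using hρ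
      linarith
    calc ‖f1 (γ ρ θ) (e θ)‖ ≤ ‖f1 (γ ρ θ)‖ * ‖e θ‖ := (f1 _).le_opNorm _
    _ ≤ K := by rw [norm_e]; simpa using hK _ hmem
  have bound2 : ∀ ρ₀ : ℝ, ∃ K, ∀ θ : ℝ, ∀ ρ ∈ Metric.ball ρ₀ 1,
      ‖f2 (γ ρ θ) (e θ) (e θ)‖ ≤ K := by
    intro ρ₀
    obtain ⟨K, hK0⟩ := (isCompact_closedBall z₀ (|ρ₀|+1)).exists_bound_of_continuousOn
      (continuous_norm2 hc2).continuousOn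
    have hK : ∀ x ∈ Metric.closedBall z₀ (|ρ₀|+1), ‖f2 x‖ ≤ K := fun x hx =>
      (le_abs_self _).trans (by simpa using hK0 x hx)
    refine ⟨K, fun θ ρ hρ => ?_⟩
    have hmem : γ ρ θ ∈ Metric.closedBall z₀ (|ρ₀|+1) := by
      rw [Metric.mem_closedBall, dist_eq_norm]
      have : ‖γ ρ θ - z₀‖ = |ρ| := by
        simp [hγ, e, norm_mul, Complex.norm_real, Real.norm_eq_abs,
          Complex.norm_exp_ofReal_mul_I]
      rw [this]
      have := abs_sub_abs_le_abs_sub ρ ρ₀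
      have h' : |ρ - ρ₀| < 1 := by simpa [Real.dist_eq] using hρ
      linarith
    calc ‖f2 (γ ρ θ) (e θ) (e θ)‖ ≤ ‖f2 (γ ρ θ) (e θ)‖ * ‖e θ‖ := (f2 _ _).le_opNorm _
    _ ≤ (‖f2 (γ ρ θ)‖ * ‖e θ‖) * ‖e θ‖ :=
        mul_le_mul_of_nonneg_right (((f2 _).le_opNorm _)) (norm_nonneg _)
    _ ≤ K := by rw [norm_e]; simpa using hK _ hmem
  have hAderiv : ∀ ρ₀ : ℝ, HasDerivAt A (B ρ₀) ρ₀ := by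
    intro ρ₀
    obtain ⟨K, hK⟩ := bound1 ρ₀
    refine (intervalIntegral.hasDerivAt_integral_of_dominated_loc_of_deriv_le
      (F := fun ρ θ => f (γ ρ θ)) (F' := fun ρ θ => f1 (γ ρ θ) (e θ))
      (bound := fun _ => K) (Metric.ball_mem_nhds ρ₀ one_pos) ?_ ?_ ?_ ?_ ?_ ?_).2
    · filter_upwards with ρ
      exact ((hcf.comp (hγcont ρ)).aestronglyMeasurable).restrict
    · exact (hcf.comp (hγcont ρ₀)).intervalIntegrable _ _
    · exact (((hcf1.comp (hγcont ρ₀)).clm_apply continuous_e).aestronglyMeasurable).restrict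
    · filter_upwards with θ _
      intro ρ hρ; exact hK θ ρ hρ
    · exact intervalIntegrable_const
    · filter_upwards with θ _
      intro ρ hρ
      exact (h1 (γ ρ θ)).comp_hasDerivAt ρ (hγρ ρ θ)
  have hBderiv : ∀ ρ₀ : ℝ, HasDerivAt B (Cc ρ₀) ρ₀ := by
    intro ρ₀
    obtain ⟨K, hK⟩ := bound2 ρ₀
    refine (intervalIntegral.hasDerivAt_integral_of_dominated_loc_of_deriv_le
      (F := fun ρ θ => f1 (γ ρ θ) (e θ)) (F' := fun ρ θ => f2 (γ ρ θ) (e θ) (e θ))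
      (bound := fun _ => K) (Metric.ball_mem_nhds ρ₀ one_pos) ?_ ?_ ?_ ?_ ?_ ?_).2
    · filter_upwards with ρ
      exact (((hcf1.comp (hγcont ρ)).clm_apply continuous_e).aestronglyMeasurable).restrict
    · exact ((hcf1.comp (hγcont ρ₀)).clm_apply continuous_e).intervalIntegrable _ _
    · exact ((((hc2.comp (hγcont ρ₀)).clm_apply continuous_e).clm_apply
        continuous_e).aestronglyMeasurable).restrict
    · filter_upwards with θ _
      intro ρ hρ; exact hK θ ρ hρ
    · exact intervalIntegrable_const
    · filter_upwards with θ _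
      intro ρ hρ
      have hc : HasDerivAt (fun ρ : ℝ => f1 (γ ρ θ)) (f2 (γ ρ θ) (e θ)) ρ :=
        (h2 (γ ρ θ)).comp_hasDerivAt ρ (hγρ ρ θ)
      have := hc.clm_apply (hasDerivAt_const ρ (e θ))
      simpa using this
  -- FTC in θ: rotation identity
  have hKey : ∀ ρ : ℝ,
      ρ * (∫ θ in (0:ℝ)..(2*Real.pi), f2 (γ ρ θ) (Complex.I * e θ) (Complex.I * e θ)) = B ρ := by
    intro ρ
    have hH : ∀ θ : ℝ, HasDerivAt (fun θ => f1 (γ ρ θ) (Complex.I * e θ))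
        (ρ * (f2 (γ ρ θ) (Complex.I * e θ) (Complex.I * e θ)) - f1 (γ ρ θ) (e θ)) θ := by
      intro θ
      have hc : HasDerivAt (fun θ : ℝ => f1 (γ ρ θ)) (f2 (γ ρ θ) ((ρ:ℂ) * (Complex.I * e θ))) θ :=
        (h2 _).comp_hasDerivAt θ (hγθ ρ θ)
      have hu : HasDerivAt (fun θ : ℝ => Complex.I * e θ) (Complex.I * (Complex.I * e θ)) θ :=
        (hasDerivAt_e θ).const_mul Complex.I
      have hcomb := hc.clm_apply hu
      refine hcomb.congr_deriv ?_
      have e1 : (f2 (γ ρ θ)) ((ρ:ℂ) * (Complex.I * e θ)) = ρ • (f2 (γ ρ θ)) (Complex.I * e θ) := by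
        rw [← Complex.real_smul, (f2 (γ ρ θ)).map_smul]
      have e2 : Complex.I * (Complex.I * e θ) = -(e θ) := by
        rw [← mul_assoc, Complex.I_mul_I, neg_one_mul]
      rw [e1, e2, map_neg]
      simp [smul_eq_mul]
      ring
    have hcont1 : Continuous fun θ => f2 (γ ρ θ) (Complex.I * e θ) (Complex.I * e θ) := by
      exact ((hc2.comp (hγcont ρ)).clm_apply (continuous_const.mul continuous_e)).clm_apply
        (continuous_const.mul continuous_e)
    have hcont2 : Continuous fun θ => f1 (γ ρ θ) (e θ) :=
      (hcf1.comp (hγcont ρ)).clm_apply continuous_e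
    have hint : IntervalIntegrable
        (fun θ => ρ * (f2 (γ ρ θ) (Complex.I * e θ) (Complex.I * e θ)) - f1 (γ ρ θ) (e θ))
        MeasureTheory.volume 0 (2*Real.pi) :=
      ((continuous_const.mul hcont1).sub hcont2).intervalIntegrable _ _
    have hftc := intervalIntegral.integral_eq_sub_of_hasDerivAt (f := fun θ => f1 (γ ρ θ) (Complex.I * e θ))
      (fun θ _ => hH θ) hint
    have hzero : f1 (γ ρ (2*Real.pi)) (Complex.I * e (2*Real.pi)) - f1 (γ ρ 0) (Complex.I * e 0) = 0 := by
      rw [show γ ρ (2*Real.pi) = γ ρ 0 by simp [hγ, e_two_pi], e_two_pi, sub_self]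
    rw [hzero] at hftc
    rw [intervalIntegral.integral_sub ((hcont1.intervalIntegrable _ _).const_mul ρ)
      (hcont2.intervalIntegrable _ _), intervalIntegral.integral_const_mul] at hftc
    rw [hB]
    linarith [hftc]
  -- rotation invariance of the trace
  have htrace : ∀ (z : ℂ) (θ : ℝ), f2 z (e θ) (e θ) + f2 z (Complex.I * e θ) (Complex.I * e θ)
      = f2 z 1 1 + f2 z Complex.I Complex.I := by
    intro z θ
    have he : e θ = Real.cos θ • (1:ℂ) + Real.sin θ • Complex.I := by
      unfold e
      rw [Complex.exp_mul_I]
      push_cast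
      simp [Complex.real_smul]
    have hie' : Complex.I * e θ = (- Real.sin θ) • (1:ℂ) + Real.cos θ • Complex.I := by
      rw [he]
      simp only [Complex.real_smul, smul_eq_mul]
      push_cast
      ring_nf
      rw [Complex.I_sq]
      ring
    rw [hie', he]
    simp only [map_add, _root_.map_smul, map_neg, ContinuousLinearMap.add_apply,
      ContinuousLinearMap.coe_smul', Pi.smul_apply, ContinuousLinearMap.neg_apply,
      Pi.neg_apply, smul_eq_mul, neg_mul, mul_neg, neg_neg, neg_smul,
      ContinuousLinearMap.smul_apply]
    have hsc := Real.sin_sq_add_cos_sq θ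
    linear_combination (((f2 z) 1) 1 + ((f2 z) I) I) * hsc
  -- derivative of ρ * B ρ is nonneg on (0, R)
  have hDpos : ∀ ρ, 0 < ρ → 0 ≤ B ρ + ρ * Cc ρ := by
    intro ρ hρ
    have hLap : Cc ρ = (∫ θ in (0:ℝ)..(2*Real.pi),
        (f2 (γ ρ θ) 1 1 + f2 (γ ρ θ) Complex.I Complex.I))
        - ∫ θ in (0:ℝ)..(2*Real.pi), f2 (γ ρ θ) (Complex.I * e θ) (Complex.I * e θ) := by
      have hcl : Continuous fun θ => f2 (γ ρ θ) 1 1 + f2 (γ ρ θ) Complex.I Complex.I := by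
        exact (((hc2.comp (hγcont ρ)).clm_apply continuous_const).clm_apply continuous_const).add
          (((hc2.comp (hγcont ρ)).clm_apply continuous_const).clm_apply continuous_const)
      have hcI : Continuous fun θ => f2 (γ ρ θ) (Complex.I * e θ) (Complex.I * e θ) :=
        ((hc2.comp (hγcont ρ)).clm_apply (continuous_const.mul continuous_e)).clm_apply
          (continuous_const.mul continuous_e)
      rw [hCc, ← intervalIntegral.integral_sub (hcl.intervalIntegrable _ _)
        (hcI.intervalIntegrable _ _)]
      apply intervalIntegral.integral_congr
      intro θ _
      have := htrace (γ ρ θ) θ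
      simp only
      linarith
    have hnn : 0 ≤ ∫ θ in (0:ℝ)..(2*Real.pi),
        (f2 (γ ρ θ) 1 1 + f2 (γ ρ θ) Complex.I Complex.I) := by
      apply intervalIntegral.integral_nonneg (by positivity)
      intro θ _
      exact hlap _
    have := hKey ρ
    have : ρ * Cc ρ = ρ * (∫ θ in (0:ℝ)..(2*Real.pi),
        (f2 (γ ρ θ) 1 1 + f2 (γ ρ θ) Complex.I Complex.I)) - B ρ := by
      rw [hLap, mul_sub, hKey ρ]
    rw [this]
    have : 0 ≤ ρ * (∫ θ in (0:ℝ)..(2*Real.pi),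
        (f2 (γ ρ θ) 1 1 + f2 (γ ρ θ) Complex.I Complex.I)) := mul_nonneg hρ.le hnn
    linarith
  -- monotonicity of D := ρ * B ρ on [0, R]
  set D : ℝ → ℝ := fun ρ => ρ * B ρ with hD
  have hDderiv : ∀ ρ : ℝ, HasDerivAt D (1 * B ρ + ρ * Cc ρ) ρ := by
    intro ρ
    exact (hasDerivAt_id ρ).mul (hBderiv ρ)
  have hDmono : MonotoneOn D (Set.Icc 0 R) := by
    apply monotoneOn_of_deriv_nonneg (convex_Icc 0 R)
    · exact (fun ρ _ => ((hDderiv ρ).differentiableAt).continuousAt.continuousWithinAt)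
    · intro ρ _
      exact ((hDderiv ρ).differentiableAt).differentiableWithinAt
    · intro ρ hρ
      rw [interior_Icc] at hρ
      rw [(hDderiv ρ).deriv]
      have := hDpos ρ hρ.1
      linarith
  have hBpos : ∀ ρ, 0 < ρ → ρ ≤ R → 0 ≤ B ρ := by
    intro ρ hρ hρR
    have h0 : D 0 ≤ D ρ := hDmono ⟨le_refl 0, hR.le⟩ ⟨hρ.le, hρR⟩ hρ.le
    have hD0 : D 0 = 0 := by simp [hD]
    rw [hD0] at h0
    exact nonneg_of_mul_nonneg_right h0 hρ
  have hAmono : MonotoneOn A (Set.Icc 0 R) := by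
    apply monotoneOn_of_deriv_nonneg (convex_Icc 0 R)
    · exact (fun ρ _ => ((hAderiv ρ).differentiableAt).continuousAt.continuousWithinAt)
    · intro ρ _
      exact ((hAderiv ρ).differentiableAt).differentiableWithinAt
    · intro ρ hρ
      rw [interior_Icc] at hρ
      rw [(hAderiv ρ).deriv]
      exact hBpos ρ hρ.1 hρ.2.le
  have hA0 : A 0 = 2 * Real.pi * f z₀ := by
    rw [hA]
    simp only [hγ, Complex.ofReal_zero, zero_mul, add_zero]
    rw [intervalIntegral.integral_const]
    simp [mul_comm]
  have hle : A 0 ≤ A R := hAmono ⟨le_refl 0, hR.le⟩ ⟨hR.le, le_refl R⟩ hR.le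
  have h2π : (0:ℝ) < 2 * Real.pi := by positivity
  have hfinal : f z₀ ≤ (2 * Real.pi)⁻¹ * A R := by
    rw [hA0] at hle
    have := mul_le_mul_of_nonneg_left hle (le_of_lt (inv_pos.mpr h2π))
    calc f z₀ = (2 * Real.pi)⁻¹ * (2 * Real.pi * f z₀) := by field_simp
    _ ≤ (2 * Real.pi)⁻¹ * A R := this
  exact hfinal

end lemA
section data

/-- squared distance to `a` -/
noncomputable def Q (a z : ℂ) : ℝ := (z.re - a.re)^2 + (z.im - a.im)^2

lemma Q_eq (a z : ℂ) : Q a z = ‖z - a‖ ^ 2 := by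
  rw [Complex.sq_norm, Complex.normSq_apply, Q, Complex.sub_re, Complex.sub_im]
  ring

lemma Q_nonneg (a z : ℂ) : 0 ≤ Q a z := by rw [Q]; positivity

lemma continuous_Q (a : ℂ) : Continuous (Q a) := by
  unfold Q; fun_prop

noncomputable def LQ (a z : ℂ) : ℂ →L[ℝ] ℝ :=
  (2*(z.re - a.re)) • Complex.reCLM + (2*(z.im - a.im)) • Complex.imCLM

noncomputable def MQ : ℂ →L[ℝ] ℂ →L[ℝ] ℝ :=
  (2:ℝ) • ((Complex.reCLM).smulRight Complex.reCLM + (Complex.imCLM).smulRight Complex.imCLM)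

lemma continuous_LQ (a : ℂ) : Continuous (fun z => LQ a z) := by
  unfold LQ
  exact ((continuous_const.mul (Complex.continuous_re.sub continuous_const)).smul
    continuous_const).add
    ((continuous_const.mul (Complex.continuous_im.sub continuous_const)).smul continuous_const)

lemma LQ_apply (a z v : ℂ) : LQ a z v = 2*(z.re - a.re) * v.re + 2*(z.im - a.im) * v.im := by
  simp [LQ]

lemma MQ_apply (v w : ℂ) : MQ v w = 2 * (v.re * w.re + v.im * w.im) := by
  simp [MQ, smul_eq_mul]
  ring

lemma hasFDerivAt_Q (a z : ℂ) : HasFDerivAt (Q a) (LQ a z) z := by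
  have hre : HasFDerivAt (fun w : ℂ => w.re - a.re) Complex.reCLM z :=
    (Complex.reCLM.hasFDerivAt (x := z)).sub_const a.re
  have him : HasFDerivAt (fun w : ℂ => w.im - a.im) Complex.imCLM z :=
    (Complex.imCLM.hasFDerivAt (x := z)).sub_const a.im
  have h1 : HasFDerivAt (fun w : ℂ => (w.re - a.re)^2)
      ((z.re - a.re) • Complex.reCLM + (z.re - a.re) • Complex.reCLM) z := by
    have hfun : (fun w : ℂ => (w.re - a.re)^2) = fun w => (w.re - a.re)*(w.re - a.re) := by
      funext w; ring
    rw [hfun]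
    exact hre.mul hre
  have h2 : HasFDerivAt (fun w : ℂ => (w.im - a.im)^2)
      ((z.im - a.im) • Complex.imCLM + (z.im - a.im) • Complex.imCLM) z := by
    have hfun : (fun w : ℂ => (w.im - a.im)^2) = fun w => (w.im - a.im)*(w.im - a.im) := by
      funext w; ring
    rw [hfun]
    exact him.mul him
  have := h1.add h2
  refine this.congr_fderiv ?_
  unfold LQ
  ext v <;> simp <;> ring

lemma hasFDerivAt_LQ (a z : ℂ) : HasFDerivAt (fun w => LQ a w) MQ z := by
  have h : (fun w => LQ a w) = fun w => MQ w - ((2*a.re) • Complex.reCLM + (2*a.im) • Complex.imCLM) := by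
    funext w
    unfold LQ MQ
    ext v <;> simp [smul_eq_mul] <;> ring
  rw [h]
  exact MQ.hasFDerivAt.sub_const _

lemma smul_smulRight (c : ℝ) (L L' : ℂ →L[ℝ] ℝ) :
    (c • L).smulRight L' = c • (L.smulRight L') := by
  ext v w <;> simp [smul_eq_mul] <;> ring

/-- package of C² facts -/
lemma c2_facts {h : ℝ → ℝ} (hh : ContDiff ℝ 2 h) :
    Differentiable ℝ h ∧ Differentiable ℝ (deriv h) ∧ Continuous (deriv h) ∧
      Continuous (deriv (deriv h)) := by
  have h2 : ContDiff ℝ (1+1) h := hh.of_le (by norm_num)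
  have hd1 := (contDiff_succ_iff_deriv.mp h2).2.2
  have hd1' : ContDiff ℝ (0+1) (deriv h) := hd1.of_le (by norm_num)
  have hd2 := (contDiff_succ_iff_deriv.mp hd1').2.2
  exact ⟨hh.differentiable (by norm_num), hd1.differentiable (by norm_num),
    hd1.continuous, hd2.continuous⟩

/-- first derivative data of `h ∘ Q a` -/
noncomputable def D1 (h : ℝ → ℝ) (a z : ℂ) : ℂ →L[ℝ] ℝ := (deriv h (Q a z)) • LQ a z

/-- second derivative data of `h ∘ Q a` -/
noncomputable def D2 (h : ℝ → ℝ) (a z : ℂ) : ℂ →L[ℝ] ℂ →L[ℝ] ℝ :=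
  (deriv h (Q a z)) • MQ + (deriv (deriv h) (Q a z)) • ((LQ a z).smulRight (LQ a z))

lemma comp_data {h : ℝ → ℝ} (hh : ContDiff ℝ 2 h) (a : ℂ) :
    (∀ z, HasFDerivAt (fun w => h (Q a w)) (D1 h a z) z) ∧
    (∀ z, HasFDerivAt (fun w => D1 h a w) (D2 h a z) z) ∧
    Continuous (fun z => D2 h a z) ∧
    (∀ z, D2 h a z 1 1 + D2 h a z Complex.I Complex.I
      = 4 * deriv h (Q a z) + 4 * (Q a z) * deriv (deriv h) (Q a z)) := by
  obtain ⟨hdh, hdh', hch', hch''⟩ := c2_facts hh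
  refine ⟨?_, ?_, ?_, ?_⟩
  · intro z
    exact (hdh (Q a z)).hasDerivAt.comp_hasFDerivAt z (hasFDerivAt_Q a z)
  · intro z
    have hc : HasFDerivAt (fun w => deriv h (Q a w))
        ((deriv (deriv h) (Q a z)) • LQ a z) z :=
      (hdh' (Q a z)).hasDerivAt.comp_hasFDerivAt z (hasFDerivAt_Q a z)
    have := hc.smul (hasFDerivAt_LQ a z)
    unfold D1 D2
    refine this.congr_fderiv ?_
    rw [smul_smulRight]
  · unfold D2
    apply Continuous.fun_add
    · exact ((hch'.comp (continuous_Q a)).smul continuous_const)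
    · apply (hch''.comp (continuous_Q a)).smul
      have : Continuous fun z => (LQ a z).smulRight (LQ a z) := by
        exact Continuous.clm_apply
          ((ContinuousLinearMap.smulRightL ℝ ℂ (ℂ →L[ℝ] ℝ)).continuous.comp (continuous_LQ a))
          (continuous_LQ a)
      exact this
  · intro z
    unfold D2
    simp only [ContinuousLinearMap.add_apply, ContinuousLinearMap.smul_apply,
      ContinuousLinearMap.smulRight_apply, smul_eq_mul, MQ_apply, LQ_apply]
    have : Q a z = (z.re - a.re)^2 + (z.im - a.im)^2 := rfl
    rw [this]
    simp [Complex.one_re, Complex.one_im, Complex.I_re, Complex.I_im]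
    ring_nf

end data

section oneD

open Real

lemma expNegInvGlue_mono : Monotone expNegInvGlue := by
  intro x y hxy
  rcases le_or_gt x 0 with hx | hx
  · rw [expNegInvGlue.zero_of_nonpos hx]; exact expNegInvGlue.nonneg y
  · have hy : 0 < y := hx.trans_le hxy
    unfold expNegInvGlue
    rw [if_neg (not_le.mpr hx), if_neg (not_le.mpr hy)]
    apply Real.exp_le_exp.mpr
    simp only [neg_le_neg_iff]
    exact inv_anti₀ hx hxy

lemma smoothTransition_mono : Monotone Real.smoothTransition := by
  intro x y hxy
  rcases le_or_gt x 0 with hx | hx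
  · rw [Real.smoothTransition.zero_of_nonpos hx]; exact Real.smoothTransition.nonneg y
  · have hy : 0 < y := hx.trans_le hxy
    show expNegInvGlue x / (expNegInvGlue x + expNegInvGlue (1-x)) ≤
      expNegInvGlue y / (expNegInvGlue y + expNegInvGlue (1-y))
    rw [div_le_div_iff₀ (Real.smoothTransition.pos_denom x) (Real.smoothTransition.pos_denom y)]
    have h1 : expNegInvGlue x ≤ expNegInvGlue y := expNegInvGlue_mono hxy
    have h2 : expNegInvGlue (1-y) ≤ expNegInvGlue (1-x) :=
      expNegInvGlue_mono (by linarith)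
    have h3 := expNegInvGlue.nonneg x
    have h4 := expNegInvGlue.nonneg (1-y)
    nlinarith [mul_le_mul h1 h2 h4 (expNegInvGlue.nonneg y)]

lemma deriv_nonneg_of_monotone {f : ℝ → ℝ} {x : ℝ} (hm : Monotone f)
    (hd : DifferentiableAt ℝ f x) : 0 ≤ deriv f x := by
  have h := hd.hasDerivAt
  rw [hasDerivAt_iff_tendsto_slope] at h
  have h' : Filter.Tendsto (slope f x) (nhdsWithin x (Set.Ioi x)) (nhds (deriv f x)) :=
    h.mono_left (nhdsWithin_mono x fun y hy => ne_of_gt hy)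
  refine ge_of_tendsto h' ?_
  filter_upwards [self_mem_nhdsWithin] with y hy
  have hxy : x < y := hy
  rw [slope_def_field]
  apply div_nonneg (by linarith [hm hxy.le]) (by linarith)

/-- the universal constant `∫₀¹ T(2x-1)/(2x) dx` -/
noncomputable def I₀ : ℝ := ∫ x in (0:ℝ)..1, Real.smoothTransition (2*x - 1) * (2*x)⁻¹

lemma I₀_nonneg : 0 ≤ I₀ := by
  apply intervalIntegral.integral_nonneg zero_le_one
  intro x hx
  exact mul_nonneg (Real.smoothTransition.nonneg _) (inv_nonneg.mpr (by linarith [hx.1]))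

variable {c : ℝ}

/-- smooth version of `1/(2s)` cut off near `0` at scale `c²` -/
noncomputable def gP (c s : ℝ) : ℝ := Real.smoothTransition (2*s/c^2 - 1) * (2*s)⁻¹

/-- smooth truncated `(1/2) log`, with exact value `log c - I₀` at `0` -/
noncomputable def ηP (c s : ℝ) : ℝ := Real.log c + ∫ t in (c^2)..s, gP c t

lemma gP_zero (hc : 0 < c) {s : ℝ} (hs : s ≤ c^2/2) : gP c s = 0 := by
  unfold gP
  rw [Real.smoothTransition.zero_of_nonpos, zero_mul]
  rw [sub_nonpos, div_le_one (by positivity)]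
  linarith

lemma gP_nonneg (hc : 0 < c) (s : ℝ) : 0 ≤ gP c s := by
  rcases le_or_gt s 0 with hs | hs
  · rw [gP_zero hc (by nlinarith)]
  · exact mul_nonneg (Real.smoothTransition.nonneg _) (by positivity)

lemma gP_eq_inv (hc : 0 < c) {s : ℝ} (hs : c^2 ≤ s) : gP c s = (2*s)⁻¹ := by
  unfold gP
  rw [Real.smoothTransition.one_of_one_le, one_mul]
  rw [le_sub_iff_add_le, le_div_iff₀ (by positivity)]
  linarith

lemma gP_contDiff (hc : 0 < c) : ContDiff ℝ 1 (gP c) := by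
  rw [contDiff_iff_contDiffAt]
  intro s
  rcases lt_or_ge s (c^2/2) with hs | hs
  · apply ContDiffAt.congr_of_eventuallyEq (contDiffAt_const (c := (0:ℝ)))
    filter_upwards [Iio_mem_nhds hs] with t ht
    exact gP_zero hc ht.le
  · have hs0 : (0:ℝ) < s := lt_of_lt_of_le (by positivity) hs
    apply ContDiffAt.mul
    · exact (Real.smoothTransition.contDiffAt).comp s
        (((contDiffAt_const.mul contDiffAt_id).div_const _).sub contDiffAt_const)
    · exact ((contDiffAt_const.mul contDiffAt_id).inv (by positivity))


lemma gP_continuous (hc : 0 < c) : Continuous (gP c) :=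
  (gP_contDiff hc).continuous

lemma ηP_hasDeriv (hc : 0 < c) (s : ℝ) : HasDerivAt (ηP c) (gP c s) s := by
  unfold ηP
  apply HasDerivAt.const_add
  exact intervalIntegral.integral_hasDerivAt_right
    (((gP_continuous hc).intervalIntegrable) _ _)
    ((gP_continuous hc).stronglyMeasurable.stronglyMeasurableAtFilter)
    (gP_continuous hc).continuousAt

lemma ηP_deriv (hc : 0 < c) : deriv (ηP c) = gP c := by
  funext s; exact (ηP_hasDeriv hc s).deriv

lemma ηP_contDiff (hc : 0 < c) : ContDiff ℝ 2 (ηP c) := by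
  have h : ContDiff ℝ (1+1) (ηP c) := by
    rw [contDiff_succ_iff_deriv]
    refine ⟨fun s => (ηP_hasDeriv hc s).differentiableAt, ?_, ?_⟩
    · intro h; exact absurd h (by norm_num)
    · rw [ηP_deriv hc]; exact gP_contDiff hc
  exact h.of_le (by norm_num)

lemma ηP_mono (hc : 0 < c) : Monotone (ηP c) := by
  intro x y hxy
  unfold ηP
  have h := intervalIntegral.integral_interval_sub_left
    (a := c^2) (b := y) (c := x)
    (((gP_continuous hc).intervalIntegrable (μ := MeasureTheory.volume)) _ _)
    (((gP_continuous hc).intervalIntegrable (μ := MeasureTheory.volume)) _ _)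
  have hnn : 0 ≤ ∫ t in x..y, gP c t :=
    intervalIntegral.integral_nonneg hxy (fun t _ => gP_nonneg hc t)
  rw [← h] at hnn
  linarith

lemma ηP_eq_log (hc : 0 < c) {s : ℝ} (hs : c^2 ≤ s) : ηP c s = (1/2) * Real.log s := by
  unfold ηP
  have hcongr : ∫ t in (c^2)..s, gP c t = ∫ t in (c^2)..s, 2⁻¹ * t⁻¹ := by
    apply intervalIntegral.integral_congr
    intro t ht
    rw [Set.uIcc_of_le hs] at ht
    rw [gP_eq_inv hc ht.1, mul_inv]
  rw [hcongr, intervalIntegral.integral_const_mul,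
    integral_inv_of_pos (by positivity) (lt_of_lt_of_le (by positivity) hs),
    Real.log_div (ne_of_gt (lt_of_lt_of_le (by positivity) hs)) (by positivity), Real.log_pow]
  push_cast
  ring

lemma ηP_zero (hc : 0 < c) : ηP c 0 = Real.log c - I₀ := by
  unfold ηP
  rw [intervalIntegral.integral_symm]
  have hsub : ∫ x in (0:ℝ)..1, gP c (c^2 * x) = (c^2)⁻¹ • ∫ x in (0:ℝ)..(c^2), gP c x := by
    have := intervalIntegral.integral_comp_mul_left (a := 0) (b := 1) (gP c)
      (by positivity : (c:ℝ)^2 ≠ 0)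
    simpa using this
  have hpt : ∀ x : ℝ, gP c (c^2 * x) = (c^2)⁻¹ * (Real.smoothTransition (2*x-1) * (2*x)⁻¹) := by
    intro x
    unfold gP
    have h1 : 2*(c^2*x)/c^2 - 1 = 2*x - 1 := by field_simp
    rw [h1]
    rw [show (2*(c^2*x)) = c^2 * (2*x) by ring, mul_inv]
    ring
  have hL : ∫ x in (0:ℝ)..1, gP c (c^2 * x) = (c^2)⁻¹ * I₀ := by
    rw [show (fun x => gP c (c^2*x)) = fun x => (c^2)⁻¹ * (Real.smoothTransition (2*x-1) * (2*x)⁻¹) from funext hpt]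
    rw [intervalIntegral.integral_const_mul]
    rfl
  have : (c^2)⁻¹ * I₀ = (c^2)⁻¹ * ∫ x in (0:ℝ)..(c^2), gP c x := by
    rw [← hL, hsub, smul_eq_mul]
  have h2 : I₀ = ∫ x in (0:ℝ)..(c^2), gP c x :=
    mul_left_cancel₀ (by positivity : ((c:ℝ)^2)⁻¹ ≠ 0) this
  rw [← h2]
  ring

/-- the spike profile: cutoff times truncated log -/
noncomputable def ΨP (r c s : ℝ) : ℝ :=
  Real.smoothTransition (2 - 2*s/r^2) * ηP c s

variable {r : ℝ}

lemma ΨP_contDiff (hc : 0 < c) : ContDiff ℝ 2 (ΨP r c) := by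
  apply ContDiff.mul
  · exact (Real.smoothTransition.contDiff).comp
      (contDiff_const.sub ((contDiff_const.mul contDiff_id).div_const _))
  · exact ηP_contDiff hc

lemma ΨP_zero_of_ge (hr : 0 < r) {s : ℝ} (hs : r^2 ≤ s) : ΨP r c s = 0 := by
  unfold ΨP
  rw [Real.smoothTransition.zero_of_nonpos, zero_mul]
  have h1 : (1:ℝ) ≤ s/r^2 := (one_le_div (by positivity)).mpr hs
  have h2 : 2*s/r^2 = 2*(s/r^2) := mul_div_assoc 2 s (r^2)
  linarith

lemma ΨP_at_zero : ΨP r c 0 = ηP c 0 := by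
  unfold ΨP
  rw [Real.smoothTransition.one_of_one_le (by simp), one_mul]

lemma ΨP_nonpos (hc : 0 < c) (hc1 : c ≤ 1) (hr : 0 < r) (hr1 : r < 1) (s : ℝ) :
    ΨP r c s ≤ 0 := by
  rcases le_or_gt s 1 with hs | hs
  · have hη : ηP c s ≤ 0 := by
      have h1 : ηP c s ≤ ηP c 1 := ηP_mono hc hs
      have h2 : ηP c 1 = 0 := by
        rw [ηP_eq_log hc (by nlinarith)]
        simp
      linarith
    exact mul_nonpos_of_nonneg_of_nonpos (Real.smoothTransition.nonneg _) hη
  · rw [ΨP_zero_of_ge hr (by nlinarith)]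

lemma ΨP_lb (hc : 0 < c) (hc1 : c ≤ 1) {s : ℝ} (hs : 0 ≤ s) :
    ηP c 0 ≤ ΨP r c s := by
  have hη0 : ηP c 0 ≤ 0 := by
    rw [ηP_zero hc]
    have := Real.log_nonpos (by positivity) hc1
    linarith [I₀_nonneg]
  rcases le_or_gt (ηP c s) 0 with hη | hη
  · have h1 : ηP c 0 ≤ ηP c s := ηP_mono hc hs
    have hT1 : Real.smoothTransition (2 - 2*s/r^2) ≤ 1 := Real.smoothTransition.le_one _
    have hT0 : 0 ≤ Real.smoothTransition (2 - 2*s/r^2) := Real.smoothTransition.nonneg _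
    unfold ΨP
    nlinarith
  · have : 0 ≤ ΨP r c s :=
      mul_nonneg (Real.smoothTransition.nonneg _) hη.le
    linarith

lemma ΨP_E_inner (hc : 0 < c) (hr : 0 < r) {s : ℝ} (hs : s < r^2/2) :
    0 ≤ deriv (ΨP r c) s + s * deriv (deriv (ΨP r c)) s := by
  have hev : ΨP r c =ᶠ[nhds s] ηP c := by
    filter_upwards [Iio_mem_nhds hs] with t ht
    unfold ΨP
    rw [Real.smoothTransition.one_of_one_le, one_mul]
    rw [Set.mem_Iio] at ht
    rw [le_sub_iff_add_le]
    have h1 : t/r^2 ≤ 1/2 := by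
      rw [div_le_div_iff₀ (by positivity) (by norm_num)]
      linarith
    have h2 : 2*t/r^2 = 2*(t/r^2) := mul_div_assoc 2 t (r^2)
    linarith
  have hd1 : deriv (ΨP r c) s = gP c s := by
    rw [hev.deriv_eq, ηP_deriv hc]
  have hd2 : deriv (deriv (ΨP r c)) s = deriv (gP c) s := by
    have h := hev.deriv
    rw [h.deriv_eq, ηP_deriv hc]
  rw [hd1, hd2]
  have hdg : DifferentiableAt ℝ (gP c) s := ((gP_contDiff hc).differentiable one_ne_zero) s
  have hprod : deriv (fun σ => σ * gP c σ) s = gP c s + s * deriv (gP c) s := by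
    rw [deriv_fun_mul differentiableAt_fun_id hdg]
    simp
  have hfun : (fun σ => σ * gP c σ) =
      fun σ => Real.smoothTransition (2*σ/c^2 - 1) / 2 := by
    funext σ
    rcases eq_or_ne σ 0 with h0 | h0
    · subst h0
      simp only [gP, zero_mul, mul_zero, zero_div]
      rw [Real.smoothTransition.zero_of_nonpos (by norm_num)]
      norm_num
    · unfold gP
      field_simp
  have hmono : Monotone fun σ => Real.smoothTransition (2*σ/c^2 - 1) / 2 := by
    intro x y hxy
    have harg : 2*x/c^2 - 1 ≤ 2*y/c^2 - 1 := by
      have : 2*x/c^2 ≤ 2*y/c^2 := by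
        apply div_le_div_of_nonneg_right ?_ (by positivity)
        linarith
      linarith
    have := smoothTransition_mono harg
    linarith
  have hdiff : Differentiable ℝ fun σ => Real.smoothTransition (2*σ/c^2 - 1) / 2 :=
    ((((Real.smoothTransition.contDiff (n := 1)).differentiable one_ne_zero).comp
      (by fun_prop : Differentiable ℝ fun σ : ℝ => 2*σ/c^2 - 1))).div_const 2
  have h0 : 0 ≤ deriv (fun σ => Real.smoothTransition (2*σ/c^2 - 1) / 2) s :=
    deriv_nonneg_of_monotone hmono (hdiff s)
  rw [← hfun] at h0
  rw [hprod] at h0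
  exact h0

/-- the c-free outer profile -/
noncomputable def WP (r s : ℝ) : ℝ :=
  Real.smoothTransition (2 - 2*s/r^2) * ((1/2) * Real.log s)

lemma ΨP_E_lb (hr : 0 < r) :
    ∃ C : ℝ, 0 ≤ C ∧ ∀ c : ℝ, 0 < c → c^2 < r^2/4 →
      ∀ s : ℝ, -C ≤ deriv (ΨP r c) s + s * deriv (deriv (ΨP r c)) s := by
  have hWcd : ContDiffOn ℝ 2 (WP r) (Set.Ioi 0) := by
    apply ContDiffOn.mul
    · exact ((Real.smoothTransition.contDiff).comp
        (contDiff_const.sub ((contDiff_const.mul contDiff_id).div_const _))).contDiffOn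
    · exact contDiffOn_const.mul (Real.contDiffOn_log.mono (fun x hx => ne_of_gt hx))
  have hW1 : ContDiffOn ℝ 1 (deriv (WP r)) (Set.Ioi 0) :=
    hWcd.deriv_of_isOpen isOpen_Ioi (by norm_num)
  have hW2 : ContDiffOn ℝ 0 (deriv (deriv (WP r))) (Set.Ioi 0) :=
    hW1.deriv_of_isOpen isOpen_Ioi (by norm_num)
  have hEcont : ContinuousOn
      (fun σ => deriv (WP r) σ + σ * deriv (deriv (WP r)) σ) (Set.Ioi 0) :=
    (hW1.continuousOn).add (continuousOn_id.mul (hW2.continuousOn))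
  obtain ⟨C, hC⟩ := (isCompact_Icc (a := r^2/4) (b := r^2)).exists_bound_of_continuousOn
    (hEcont.mono (fun x hx => lt_of_lt_of_le (by positivity) hx.1))
  refine ⟨max C 0, le_max_right _ _, fun c hc hcr s => ?_⟩
  rcases lt_or_ge s (r^2/2) with hs | hs
  · have := ΨP_E_inner hc hr hs
    have h2 : -(max C 0) ≤ 0 := by simp
    linarith
  · have hsc : c^2 < s := by nlinarith
    have hev : ΨP r c =ᶠ[nhds s] WP r := by
      filter_upwards [Ioi_mem_nhds hsc] with t ht
      unfold ΨP WP
      rw [ηP_eq_log hc (le_of_lt ht)]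
    have hd1 : deriv (ΨP r c) s = deriv (WP r) s := hev.deriv_eq
    have hd2 : deriv (deriv (ΨP r c)) s = deriv (deriv (WP r)) s := hev.deriv.deriv_eq
    rw [hd1, hd2]
    rcases le_or_gt s (r^2) with hs2 | hs2
    · have hmem : s ∈ Set.Icc (r^2/4) (r^2) := ⟨by linarith, hs2⟩
      have := hC s hmem
      rw [Real.norm_eq_abs, abs_le] at this
      have : -(max C 0) ≤ deriv (WP r) s + s * deriv (deriv (WP r)) s := by
        have h3 := this.1
        have h4 : C ≤ max C 0 := le_max_left _ _
        linarith
      exact this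
    · have hev0 : WP r =ᶠ[nhds s] (fun _ => (0:ℝ)) := by
        filter_upwards [Ioi_mem_nhds hs2] with t ht
        unfold WP
        rw [Real.smoothTransition.zero_of_nonpos, zero_mul]
        have h1 : (1:ℝ) < t/r^2 := (one_lt_div (by positivity)).mpr ht
        have h2 : 2*t/r^2 = 2*(t/r^2) := mul_div_assoc 2 t (r^2)
        linarith
      rw [hev0.deriv_eq, hev0.deriv.deriv_eq]
      simp

end oneD

section spike

open Real

lemma spike_exists (a : ℂ) (hN : 1 < ‖a‖) (r β : ℝ)
    (hr0 : 0 < r) (hr1 : r < 1) (hβ : 0 < β) :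
    ∃ (s : ℂ → ℝ) (s1 : ℂ → ℂ →L[ℝ] ℝ) (s2 : ℂ → ℂ →L[ℝ] ℂ →L[ℝ] ℝ),
      (∀ z, HasFDerivAt s (s1 z) z) ∧ (∀ z, HasFDerivAt s1 (s2 z) z) ∧
      Continuous s2 ∧
      (∀ z, r ≤ ‖z - a‖ → s z = 0) ∧
      (∀ z, 1 - ‖a‖ ^ 2 ≤ s z) ∧ (∀ z, s z ≤ 0) ∧
      (s a = 1 - ‖a‖ ^ 2) ∧
      (∀ z, -β ≤ s2 z 1 1 + s2 z Complex.I Complex.I) := by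
  set N2 := ‖a‖ ^ 2 with hN2def
  have hN2 : 1 < N2 := by
    have h0 : (0:ℝ) ≤ ‖a‖ := norm_nonneg a
    nlinarith
  obtain ⟨C, hC0, hC⟩ := ΨP_E_lb (r := r) hr0
  set D := |I₀| + |Real.log (r/2)| + 1 with hDdef
  have hD : 0 < D := by positivity
  set ε := min (β/(4*C+4)) ((N2-1)/D) with hεdef
  have hε : 0 < ε := lt_min (by positivity) (div_pos (by linarith) hD)
  have hε1 : ε ≤ β/(4*C+4) := min_le_left _ _
  have hε2 : ε ≤ (N2-1)/D := min_le_right _ _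
  set K := (N2-1)/ε with hKdef
  have hK : D ≤ K := by
    rw [hKdef, le_div_iff₀ hε]
    calc D * ε ≤ D * ((N2-1)/D) := by
          apply mul_le_mul_of_nonneg_left hε2 hD.le
    _ = N2 - 1 := by field_simp
  set c := Real.exp (I₀ - K) with hcdef
  have hc : 0 < c := Real.exp_pos _
  have hlogc : Real.log c = I₀ - K := Real.log_exp _
  have hcr2 : c < r/2 := by
    have h1 : I₀ - K < Real.log (r/2) := by
      have h2 : -|Real.log (r/2)| ≤ Real.log (r/2) := neg_abs_le _
      have h3 : I₀ ≤ |I₀| := le_abs_self _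
      rw [hDdef] at hK
      linarith
    calc c = Real.exp (I₀ - K) := hcdef
    _ < Real.exp (Real.log (r/2)) := Real.exp_lt_exp.mpr h1
    _ = r/2 := Real.exp_log (by positivity)
  have hc1 : c ≤ 1 := by linarith
  have hcr : c^2 < r^2/4 := by nlinarith
  have hη0 : ηP c 0 = -K := by
    rw [ηP_zero hc, hlogc]; ring
  set h : ℝ → ℝ := fun σ => ε * ΨP r c σ with hhdef
  have hh : ContDiff ℝ 2 h := contDiff_const.mul (ΨP_contDiff hc)
  obtain ⟨hd1, hd2, hcont2, hlapval⟩ := comp_data hh a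
  have hderiv_h : deriv h = fun σ => ε * deriv (ΨP r c) σ := by
    funext σ
    rw [hhdef]
    exact deriv_const_mul_field ε
  have hderiv2_h : deriv (deriv h) = fun σ => ε * deriv (deriv (ΨP r c)) σ := by
    rw [hderiv_h]
    funext σ
    exact deriv_const_mul_field ε
  refine ⟨fun w => h (Q a w), D1 h a, D2 h a, hd1, hd2, hcont2, ?_, ?_, ?_, ?_, ?_⟩
  · intro z hz
    have hQ : r^2 ≤ Q a z := by
      rw [Q_eq]
      have := norm_nonneg (z - a)
      nlinarith
    rw [hhdef]
    simp only
    rw [ΨP_zero_of_ge hr0 hQ, mul_zero]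
  · intro z
    have hlb := ΨP_lb (r := r) hc hc1 (Q_nonneg a z)
    have h2 : ε * ηP c 0 ≤ ε * ΨP r c (Q a z) :=
      mul_le_mul_of_nonneg_left hlb hε.le
    have h3 : ε * ηP c 0 = 1 - N2 := by
      rw [hη0, hKdef]
      field_simp
      ring
    rw [hhdef]
    simp only
    rw [← h3]
    exact h2
  · intro z
    rw [hhdef]
    simp only
    exact mul_nonpos_of_nonneg_of_nonpos hε.le (ΨP_nonpos hc hc1 hr0 hr1 _)
  · have hQa : Q a a = 0 := by simp [Q]
    rw [hhdef]
    simp only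
    rw [hQa, ΨP_at_zero, hη0, hKdef]
    field_simp
    ring
  · intro z
    rw [hlapval z, hderiv2_h, hderiv_h]
    simp only
    have hE := hC c hc hcr (Q a z)
    have hQnn := Q_nonneg a z
    have hεC : 4 * ε * C ≤ β := by
      have h4 : ε * (4*C+4) ≤ β := by
        rw [← le_div_iff₀ (by positivity)] at *
        exact hε1
      nlinarith
    nlinarith [mul_le_mul_of_nonneg_left hE (by positivity : (0:ℝ) ≤ 4*ε),
      mul_le_mul_of_nonneg_left hE (mul_nonneg (by positivity : (0:ℝ) ≤ 4*ε) hQnn)]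

/-- derivative data for the base function `|z|²` -/
lemma base_data :
    (∀ z, HasFDerivAt (fun w => ‖w‖ ^ 2) (D1 id 0 z) z) ∧
    (∀ z, HasFDerivAt (fun w => D1 id 0 w) (D2 id 0 z) z) ∧
    Continuous (fun z => D2 id 0 z) ∧
    (∀ z, D2 id 0 z 1 1 + D2 id 0 z Complex.I Complex.I = 4) := by
  have hid : ContDiff ℝ 2 (id : ℝ → ℝ) := contDiff_id
  obtain ⟨hd1, hd2, hcont2, hlapval⟩ := comp_data hid 0
  have habs : (fun w => ‖w‖ ^ 2) = fun w => id (Q 0 w) := by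
    funext w
    rw [id, Q_eq, sub_zero]
  refine ⟨?_, hd2, hcont2, ?_⟩
  · intro z
    rw [habs]
    exact hd1 z
  · intro z
    rw [hlapval z]
    have h1 : deriv (id : ℝ → ℝ) = fun _ => 1 := by
      funext x; exact deriv_id x
    rw [h1]
    simp

end spike

end SH8


theorem stmt_8 (θ : ℕ → ℝ) (hdense : Set.Icc (0:ℝ) (2 * Real.pi) ⊆ closure (Set.range θ))
    (a : ℕ → ℂ)
    (ha : ∀ j : ℕ, a j = ((1 + ((j : ℝ) + 1)⁻¹ : ℝ) : ℂ) * Complex.exp ((θ j : ℂ) * Complex.I)) :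
    ∃ u : ℂ → ℝ, Continuous u ∧ SubharmonicOn u Set.univ ∧
      (∀ j : ℕ, u (a j) = 1) ∧
      ∀ z ∈ closedBall (0:ℂ) 1, u z = ‖z‖ ^ 2 := by
  classical
  set d : ℕ → ℝ := fun j => ((j:ℝ)+1)⁻¹ with hddef
  have hd0 : ∀ j, 0 < d j := fun j => by positivity
  have hd1 : ∀ j, d j ≤ 1 := fun j => by
    rw [hddef]
    simp only
    rw [inv_le_one_iff₀]
    right; linarith [Nat.cast_nonneg (α := ℝ) j]
  have habs : ∀ j, ‖a j‖ = 1 + d j := by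
    intro j
    rw [ha j, norm_mul, Complex.norm_real, Complex.norm_exp_ofReal_mul_I, mul_one]
    rw [Real.norm_eq_abs, abs_of_pos (by positivity)]
  set r : ℕ → ℝ := fun j => (4*((j:ℝ)+1)*((j:ℝ)+2))⁻¹ with hrdef
  have hr0 : ∀ j, 0 < r j := fun j => by positivity
  have hr1 : ∀ j, r j < 1 := by
    intro j
    rw [hrdef]
    simp only
    rw [inv_lt_one_iff₀]
    right
    nlinarith [Nat.cast_nonneg (α := ℝ) j]
  have hrd : ∀ j, r j ≤ d j / 2 := by
    intro j
    rw [hrdef, hddef]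
    simp only
    rw [div_eq_inv_mul, ← mul_inv]
    apply inv_anti₀ (by positivity)
    nlinarith [Nat.cast_nonneg (α := ℝ) j]
  have hranti : ∀ j k, j ≤ k → r k ≤ r j := by
    intro j k hjk
    apply inv_anti₀ (by positivity)
    have : (j:ℝ) ≤ (k:ℝ) := Nat.cast_le.mpr hjk
    nlinarith [Nat.cast_nonneg (α := ℝ) j]
  have hsep : ∀ j k, j < k → r j + r k ≤ d j - d k := by
    intro j k hjk
    have h1 : r k ≤ r j := hranti j k hjk.le
    have h2 : d k ≤ ((j:ℝ)+2)⁻¹ := by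
      rw [hddef]
      apply inv_anti₀ (by positivity)
      have : ((j:ℝ)+1) ≤ (k:ℝ) := by exact_mod_cast Nat.succ_le_of_lt hjk
      linarith
    have h3 : d j - ((j:ℝ)+2)⁻¹ = 4 * r j := by
      rw [hddef, hrdef]
      simp only
      have hx : (0:ℝ) < (j:ℝ)+1 := by positivity
      have hy : (0:ℝ) < (j:ℝ)+2 := by positivity
      field_simp
      ring
    have h4 := hr0 j
    linarith
  have habs_sep : ∀ j k, j ≠ k → r j + r k ≤ ‖a j - a k‖ := by
    have key : ∀ j k, j < k → r j + r k ≤ ‖a j - a k‖ := by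
      intro j k hjk
      have h1 : |‖a j‖ - ‖a k‖| ≤ ‖a j - a k‖ := abs_norm_sub_norm_le _ _
      have h2 : ‖a j‖ = 1 + d j := by rw [habs]
      have h3 : ‖a k‖ = 1 + d k := by rw [habs]
      have h4 : d k ≤ d j := by
        rw [hddef]
        apply inv_anti₀ (by positivity)
        have : (j:ℝ) ≤ (k:ℝ) := Nat.cast_le.mpr hjk.le
        linarith
      rw [h2, h3] at h1
      have h5 : |(1 + d j) - (1 + d k)| = d j - d k := by
        rw [_root_.abs_of_nonneg (by linarith)]
        ring
      rw [show (1 + d j) - (1 + d k) = (1 + d j) - (1 + d k) from rfl] at h1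
      rw [h5] at h1
      linarith [hsep j k hjk]
    intro j k hjk
    rcases lt_or_gt_of_ne hjk with h | h
    · exact key j k h
    · have := key k j h
      rw [← norm_neg, neg_sub] at this
      linarith
  -- the spikes
  have hspike : ∀ j : ℕ, ∃ (s : ℂ → ℝ) (s1 : ℂ → ℂ →L[ℝ] ℝ) (s2 : ℂ → ℂ →L[ℝ] ℂ →L[ℝ] ℝ),
      (∀ z, HasFDerivAt s (s1 z) z) ∧ (∀ z, HasFDerivAt s1 (s2 z) z) ∧
      Continuous s2 ∧
      (∀ z, r j ≤ ‖z - a j‖ → s z = 0) ∧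
      (∀ z, 1 - ‖a j‖ ^ 2 ≤ s z) ∧ (∀ z, s z ≤ 0) ∧
      (s (a j) = 1 - ‖a j‖ ^ 2) ∧
      (∀ z, -((1/2:ℝ)^j) ≤ s2 z 1 1 + s2 z Complex.I Complex.I) := by
    intro j
    exact SH8.spike_exists (a j) (by rw [habs]; linarith [hd0 j]) (r j) ((1/2:ℝ)^j)
      (hr0 j) (hr1 j) (by positivity)
  choose s s1 s2 hsd1 hsd2 hsc2 hsupp hslb hsub hsval hslap using hspike
  have hscont : ∀ j, Continuous (s j) := fun j =>
    Differentiable.continuous (fun z => (hsd1 j z).differentiableAt)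
  have hsupp' : ∀ j z, s j z ≠ 0 → ‖z - a j‖ < r j := by
    intro j z hz
    by_contra h
    exact hz (hsupp j z (not_lt.mp h))
  have hshell : ∀ j z, s j z ≠ 0 →
      1 + d j/2 ≤ ‖z‖ ∧ ‖z‖ ≤ 1 + 2 * d j := by
    intro j z hz
    have h1 := hsupp' j z hz
    have h2 : |‖z‖ - ‖a j‖| ≤ ‖z - a j‖ := abs_norm_sub_norm_le _ _
    rw [abs_le] at h2
    have h3 : ‖a j‖ = 1 + d j := by rw [habs]
    rw [h3] at h2
    have h4 := hrd j
    have h5 := hd0 j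
    constructor
    · linarith [h2.1]
    · linarith [h2.2]
  have huniq : ∀ z j k, s j z ≠ 0 → s k z ≠ 0 → j = k := by
    intro z j k hj hk
    by_contra hne
    have h1 := hsupp' j z hj
    have h2 := hsupp' k z hk
    have h3 := habs_sep j k hne
    have h4 : ‖a j - a k‖ ≤ ‖z - a j‖ + ‖z - a k‖ := by
      calc ‖a j - a k‖ = ‖(a j - z) + (z - a k)‖ := by ring_nf
      _ ≤ ‖a j - z‖ + ‖z - a k‖ := norm_add_le _ _
      _ = ‖z - a j‖ + ‖z - a k‖ := by rw [norm_sub_rev]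
    linarith
  -- bound on individual spikes
  have hsabs : ∀ j z, |s j z| ≤ 3 * d j := by
    intro j z
    rw [abs_le]
    constructor
    · have h1 := hslb j z
      have h2 : ‖a j‖ ^ 2 = (1 + d j)^2 := by rw [habs]
      have h3 := hd1 j
      have h4 := hd0 j
      nlinarith [h1]
    · have := hsub j z
      have h4 := hd0 j
      linarith
  -- the total spike sum
  set Sm : ℂ → ℝ := fun z => ∑' j, s j z with hSmdef
  have hSm_single : ∀ z j₀, s j₀ z ≠ 0 → Sm z = s j₀ z := by
    intro z j₀ hj₀
    rw [hSmdef]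
    apply tsum_eq_single
    intro k hk
    by_contra hkz
    exact hk (huniq z k j₀ hkz hj₀)
  have hSm_zero : ∀ z, (∀ j, s j z = 0) → Sm z = 0 := by
    intro z hz
    rw [hSmdef]
    simp only
    rw [show (fun j => s j z) = fun _ => (0:ℝ) from funext hz]
    exact tsum_zero
  have hSm_cases : ∀ z, Sm z = 0 ∨ ∃ j₀, Sm z = s j₀ z ∧ s j₀ z ≠ 0 := by
    intro z
    by_cases h : ∃ j, s j z ≠ 0
    · obtain ⟨j₀, hj₀⟩ := h
      exact Or.inr ⟨j₀, hSm_single z j₀ hj₀, hj₀⟩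
    · push_neg at h
      exact Or.inl (hSm_zero z h)
  have hSm_bound3 : ∀ z, |Sm z| ≤ 3 := by
    intro z
    rcases hSm_cases z with h | ⟨j₀, h, _⟩
    · rw [h]; norm_num
    · rw [h]
      calc |s j₀ z| ≤ 3 * d j₀ := hsabs j₀ z
      _ ≤ 3 := by linarith [hd1 j₀]
  have hSm_shell : ∀ z, |Sm z| ≤ 6 * |‖z‖ - 1| := by
    intro z
    rcases hSm_cases z with h | ⟨j₀, h, hj₀⟩
    · rw [h, abs_zero]; positivity
    · rw [h]
      have h1 := (hshell j₀ z hj₀).1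
      have h2 := hd0 j₀
      calc |s j₀ z| ≤ 3 * d j₀ := hsabs j₀ z
      _ ≤ 6 * (‖z‖ - 1) := by linarith
      _ ≤ 6 * |‖z‖ - 1| := by
          have := le_abs_self (‖z‖ - 1)
          linarith
  -- our function
  set u : ℂ → ℝ := fun z => ‖z‖ ^ 2 + Sm z with hudef
  set um : ℕ → ℂ → ℝ := fun m z => ‖z‖ ^ 2 + ∑ j ∈ Finset.range m, s j z
    with humdef
  have habs2cont : Continuous fun z : ℂ => ‖z‖ ^ 2 :=
    continuous_norm.pow 2
  have humcont : ∀ m, Continuous (um m) := by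
    intro m
    exact habs2cont.add (continuous_finset_sum _ (fun j _ => hscont j))
  -- pointwise convergence um m z → u z, eventually constant
  have hconv : ∀ z, ∃ M : ℕ, ∀ m, M ≤ m → um m z = u z := by
    intro z
    rcases hSm_cases z with h | ⟨j₀, h, hj₀⟩
    · refine ⟨0, fun m _ => ?_⟩
      have hall : ∀ j, s j z = 0 := by
        intro j
        by_contra hj
        rw [hSm_single z j hj] at h
        exact hj h
      rw [humdef, hudef]
      simp only
      rw [h, Finset.sum_eq_zero (fun j _ => hall j)]
    · refine ⟨j₀ + 1, fun m hm => ?_⟩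
      rw [humdef, hudef]
      simp only
      rw [h, Finset.sum_eq_single j₀ (fun k _ hk => by
        by_contra hkz
        exact hk (huniq z k j₀ hkz hj₀))
        (fun hj₀m => absurd (Finset.mem_range.mpr (by omega)) hj₀m)]
  have hconv' : ∀ z, Filter.Tendsto (fun m => um m z) Filter.atTop (nhds (u z)) := by
    intro z
    obtain ⟨M, hM⟩ := hconv z
    exact tendsto_atTop_of_eventually_const hM
  -- sub-mean value property of each um
  have humsub : ∀ m z R, 0 < R → um m z ≤ cAvg (um m) z R := by
    intro m z R hR
    apply SH8.submean_of_data
      (f1 := fun z => SH8.D1 id 0 z + ∑ j ∈ Finset.range m, s1 j z)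
      (f2 := fun z => SH8.D2 id 0 z + ∑ j ∈ Finset.range m, s2 j z)
    · intro w
      exact (SH8.base_data.1 w).add (HasFDerivAt.fun_sum (fun j _ => hsd1 j w))
    · intro w
      exact (SH8.base_data.2.1 w).add (HasFDerivAt.fun_sum (fun j _ => hsd2 j w))
    · exact SH8.base_data.2.2.1.add (continuous_finset_sum _ (fun j _ => hsc2 j))
    · intro w
      simp only [ContinuousLinearMap.add_apply, ContinuousLinearMap.sum_apply]
      have hbase := SH8.base_data.2.2.2 w
      have hsum : -2 ≤ (∑ j ∈ Finset.range m, s2 j w 1 1) +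
          ∑ j ∈ Finset.range m, s2 j w Complex.I Complex.I := by
        rw [← Finset.sum_add_distrib]
        have h1 : ∀ j ∈ Finset.range m, -((1/2:ℝ)^j) ≤ s2 j w 1 1 + s2 j w Complex.I Complex.I :=
          fun j _ => hslap j w
        have h2 := Finset.sum_le_sum h1
        have h3 : ∑ j ∈ Finset.range m, -((1/2:ℝ)^j) = -∑ j ∈ Finset.range m, ((1/2:ℝ)^j) := by
          rw [Finset.sum_neg_distrib]
        have h4 : ∑ j ∈ Finset.range m, ((1/2:ℝ)^j) ≤ 2 := sum_geometric_two_le m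
        rw [h3] at h2
        linarith
      linarith
    · exact hR
  -- sub-mean value property of u
  have husub : ∀ z R, 0 < R → u z ≤ cAvg u z R := by
    intro z R hR
    have h1 : Filter.Tendsto (fun m => um m z) Filter.atTop (nhds (u z)) := hconv' z
    have h2 : Filter.Tendsto (fun m => cAvg (um m) z R) Filter.atTop (nhds (cAvg u z R)) := by
      unfold cAvg
      apply Filter.Tendsto.const_mul
      apply intervalIntegral.tendsto_integral_filter_of_dominated_convergence
        (bound := fun θ => ‖z + (R:ℂ) * Complex.exp (θ * Complex.I)‖ ^ 2 + 3)
      · filter_upwards with m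
        exact ((humcont m).comp (by fun_prop)).aestronglyMeasurable.restrict
      · filter_upwards with m
        filter_upwards with θ'
        intro _
        set w := z + (R:ℂ) * Complex.exp (θ' * Complex.I)
        rw [humdef]
        simp only
        have hsum_bound : |∑ j ∈ Finset.range m, s j w| ≤ 3 := by
          by_cases h : ∃ j ∈ Finset.range m, s j w ≠ 0
          · obtain ⟨j₀, hj₀m, hj₀⟩ := h
            rw [Finset.sum_eq_single j₀ (fun k _ hk => by
              by_contra hkz
              exact hk (huniq w k j₀ hkz hj₀)) (fun h' => absurd hj₀m h')]
            calc |s j₀ w| ≤ 3 * d j₀ := hsabs j₀ w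
            _ ≤ 3 := by linarith [hd1 j₀]
          · push_neg at h
            rw [Finset.sum_eq_zero h]
            norm_num
        rw [Real.norm_eq_abs]
        have h0 : (0:ℝ) ≤ ‖w‖ ^ 2 := by positivity
        calc |‖w‖ ^ 2 + ∑ j ∈ Finset.range m, s j w|
            ≤ |‖w‖ ^ 2| + |∑ j ∈ Finset.range m, s j w| := abs_add_le _ _
        _ ≤ ‖w‖ ^ 2 + 3 := by
            rw [_root_.abs_of_nonneg h0]
            linarith
      · exact ((habs2cont.comp (by fun_prop)).add continuous_const).intervalIntegrable _ _
      · filter_upwards with θ'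
        intro _
        exact hconv' _
    exact le_of_tendsto_of_tendsto' h1 h2 (fun m => humsub m z R hR)
  -- continuity of u
  have hucont : Continuous u := by
    rw [continuous_iff_continuousAt]
    intro z₀
    rcases lt_trichotomy (‖z₀‖) 1 with h1 | h1 | h1
    · have hev : ∀ᶠ z in nhds z₀, u z = ‖z‖ ^ 2 := by
        filter_upwards [Metric.ball_mem_nhds z₀ (by linarith : 0 < 1 - ‖z₀‖)]
          with z hz
        have hzlt : ‖z‖ < 1 := by
          have h2 : ‖z - z₀‖ < 1 - ‖z₀‖ := by
            rw [← dist_eq_norm]; exact hz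
          have h3 : ‖z‖ - ‖z₀‖ ≤ ‖z - z₀‖ := norm_sub_norm_le _ _
          linarith
        have hall : ∀ j, s j z = 0 := by
          intro j
          by_contra hj
          have := (hshell j z hj).1
          linarith [hd0 j]
        rw [hudef]
        simp only
        rw [hSm_zero z hall, add_zero]
      exact habs2cont.continuousAt.congr (Filter.EventuallyEq.symm hev)
    · -- on the unit circle
      rw [hudef]
      apply ContinuousAt.add habs2cont.continuousAt
      have hSmz₀ : Sm z₀ = 0 := by
        apply hSm_zero
        intro j
        by_contra hj
        have := (hshell j z₀ hj).1
        rw [h1] at this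
        linarith [hd0 j]
      rw [ContinuousAt, hSmz₀]
      apply squeeze_zero_norm (a := fun z => 6 * |‖z‖ - 1|)
        (fun z => by rw [Real.norm_eq_abs]; exact hSm_shell z)
      have hg : Continuous fun z : ℂ => 6 * |‖z‖ - 1| := by
        apply continuous_const.mul
        exact (continuous_norm.sub continuous_const).abs
      have hgt := hg.continuousAt (x := z₀)
      rw [ContinuousAt, h1] at hgt
      simpa using hgt
    · -- outside the closed disc
      set δ := ‖z₀‖ - 1 with hδdef
      have hδ : 0 < δ := by linarith
      obtain ⟨M, hM⟩ := exists_nat_gt (8/(3*δ))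
      have hkey : ∀ z ∈ Metric.ball z₀ (δ/4), ∀ j, M ≤ j → s j z = 0 := by
        intro z hz j hj
        by_contra hjz
        have h2 := (hshell j z hjz).2
        have h3 : ‖z₀‖ - ‖z‖ ≤ ‖z₀ - z‖ := norm_sub_norm_le _ _
        have h4 : ‖z₀ - z‖ < δ/4 := by
          rw [norm_sub_rev, ← dist_eq_norm]; exact hz
        have h5 : 1 + (3/4)*δ ≤ ‖z‖ := by
          rw [hδdef] at *
          linarith
        have h6 : (3/8)*δ ≤ d j := by linarith
        have h7 : d j ≤ ((M:ℝ)+1)⁻¹ := by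
          rw [hddef]
          apply inv_anti₀ (by positivity)
          have : (M:ℝ) ≤ (j:ℝ) := Nat.cast_le.mpr hj
          linarith
        have h8 : ((M:ℝ)+1)⁻¹ < (3/8)*δ := by
          have h9 : 8/(3*δ) < (M:ℝ)+1 := by linarith [hM]
          have h10 : ((M:ℝ)+1)⁻¹ < (8/(3*δ))⁻¹ := by
            apply inv_strictAnti₀ (by positivity) h9
          have h11 : (8/(3*δ))⁻¹ = 3*δ/8 := by
            rw [inv_div]
          rw [h11] at h10
          linarith
        linarith
      have hev : u =ᶠ[nhds z₀] um M := by
        filter_upwards [Metric.ball_mem_nhds z₀ (by positivity : 0 < δ/4)] with z hz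
        rw [hudef, humdef]
        simp only
        congr 1
        rw [hSmdef]
        simp only
        apply tsum_eq_sum
        intro j hj
        exact hkey z hz j (by simpa [Finset.mem_range, not_lt] using hj)
      exact (humcont M).continuousAt.congr (Filter.EventuallyEq.symm hev)
  -- conclusion
  refine ⟨u, hucont, ⟨hucont.upperSemicontinuous.upperSemicontinuousOn _,
    fun z _ => fun R hR _ => husub z R hR⟩, ?_, ?_⟩
  · intro j
    have habs2 : ‖a j‖ ^ 2 = (1 + d j)^2 := by rw [habs]
    have hne : s j (a j) ≠ 0 := by
      rw [hsval j, habs2]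
      have := hd0 j
      nlinarith
    have : Sm (a j) = s j (a j) := hSm_single (a j) j hne
    rw [hudef]
    simp only
    rw [this, hsval j]
    ring
  · intro z hz
    rw [Metric.mem_closedBall, Complex.dist_eq, sub_zero] at hz
    have hall : ∀ j, s j z = 0 := by
      intro j
      apply hsupp j z
      have h3 : ‖a j‖ - ‖z‖ ≤ ‖a j - z‖ := norm_sub_norm_le _ _
      rw [norm_sub_rev] at h3
      rw [habs] at h3
      have h4 := hrd j
      have h5 := hd0 j
      linarith
    rw [hudef]
    simp only
    rw [hSm_zero z hall, add_zero]
end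

section
/- (Hopf lemma consequence) Let U ⊂ ℂ be an open neighborhood of the closed unit disc 𝔻̄ and let v be subharmonic on U with v < 1 on the open unit disc 𝔻 and v ≡ 1 on the unit circle b𝔻. Then there exists c > 0 such that v(z) ≤ 1 − c·dist(z, b𝔻) for all z ∈ 𝔻̄. -/
open Complex Metric MeasureTheory Real Set

/- Auxiliary lemmas -/

lemma usc_closed_superlevel {f : ℂ → ℝ} {K : Set ℂ} (hcl : IsClosed K)
    (hf : UpperSemicontinuousOn f K) (c : ℝ) : IsClosed {x | x ∈ K ∧ c ≤ f x} := by
  rw [← isSeqClosed_iff_isClosed]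
  intro u x hu hx
  have hxK : x ∈ K := hcl.isSeqClosed (fun n => (hu n).1) hx
  refine ⟨hxK, ?_⟩
  by_contra hlt
  push_neg at hlt
  have h1 : ∀ᶠ y in nhdsWithin x K, f y < c := hf x hxK c hlt
  have h2 : Filter.Tendsto u Filter.atTop (nhdsWithin x K) := by
    rw [tendsto_nhdsWithin_iff]
    exact ⟨hx, Filter.Eventually.of_forall fun n => (hu n).1⟩
  have := (h2.eventually h1).exists
  obtain ⟨n, hn⟩ := this
  exact absurd (hu n).2 (not_le.mpr hn)

lemma usc_exists_max {f : ℂ → ℝ} {K : Set ℂ} (hK : IsCompact K) (hcl : IsClosed K)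
    (hne : K.Nonempty) (hf : UpperSemicontinuousOn f K) :
    ∃ x ∈ K, ∀ y ∈ K, f y ≤ f x := by
  haveI : Nonempty K := hne.to_subtype
  set t : K → Set ℂ := fun p => {x | x ∈ K ∧ f p.1 ≤ f x} with ht
  have htd : Directed (· ⊇ ·) t := by
    intro p q
    rcases le_total (f p.1) (f q.1) with h | h
    · exact ⟨q, fun x hx => ⟨hx.1, h.trans hx.2⟩, fun x hx => hx⟩
    · exact ⟨p, fun x hx => hx, fun x hx => ⟨hx.1, h.trans hx.2⟩⟩
  have htn : ∀ p, (t p).Nonempty := fun p => ⟨p.1, p.2, le_refl _⟩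
  have htcl : ∀ p, IsClosed (t p) := fun p => usc_closed_superlevel hcl hf _
  have htc : ∀ p, IsCompact (t p) := fun p =>
    hK.of_isClosed_subset (htcl p) (fun x hx => hx.1)
  obtain ⟨x, hx⟩ := IsCompact.nonempty_iInter_of_directed_nonempty_isCompact_isClosed t htd htn htc htcl
  simp only [mem_iInter] at hx
  exact ⟨x, (hx ⟨hne.some, hne.some_mem⟩).1, fun y hy => (hx ⟨y, hy⟩).2⟩


lemma mean_value_complex {f : ℂ → ℂ} {z : ℂ} {r : ℝ} (hr : 0 < r)
    (h : DiffContOnCl ℂ f (ball z r)) :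
    ∫ θ in (0:ℝ)..(2*π), f (circleMap z r θ) = (2*π : ℝ) * f z := by
  have hC := h.circleIntegral_sub_inv_smul (mem_ball_self hr)
  rw [circleIntegral, smul_eq_mul] at hC
  have hI : ∫ θ in (0:ℝ)..(2*π), I * f (circleMap z r θ)
      = (2 * ↑π * I : ℂ) * f z := by
    rw [← hC]
    apply intervalIntegral.integral_congr
    intro θ _
    have hne : circleMap 0 r θ ≠ 0 := by
      simp [circleMap, Complex.exp_ne_zero, hr.ne']
    simp only [deriv_circleMap, circleMap_sub_center, smul_eq_mul]
    field_simp
  rw [intervalIntegral.integral_const_mul] at hI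
  have : (I : ℂ) * ∫ θ in (0:ℝ)..(2*π), f (circleMap z r θ) = I * ((2*π:ℝ) * f z) := by
    rw [hI]; push_cast; ring
  exact mul_left_cancel₀ I_ne_zero this

lemma integral_log_circle (z : ℂ) (r : ℝ) (hr : 0 < r) (hrz : r < ‖z‖) :
    ∫ θ in (0:ℝ)..(2*π), Real.log (‖circleMap z r θ‖)
      = 2*π * Real.log (‖z‖) := by
  have hz0 : 0 < ‖z‖ := lt_trans hr hrz
  set f : ℂ → ℂ := fun w => Complex.log ((starRingEnd ℂ) z * w) with hf
  have hre : ∀ w ∈ closedBall z r, 0 < ((starRingEnd ℂ) z * w).re := by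
    intro w hw
    have hwz : ‖w - z‖ ≤ r := by
      rw [← Complex.dist_eq]; exact mem_closedBall.mp hw
    have h1 : (starRingEnd ℂ) z * w = ↑(Complex.normSq z) + (starRingEnd ℂ) z * (w - z) := by
      rw [Complex.normSq_eq_conj_mul_self]; ring
    have h2 : -(‖z‖ * r) ≤ ((starRingEnd ℂ) z * (w - z)).re := by
      have h3 := (abs_le.mp (Complex.abs_re_le_norm ((starRingEnd ℂ) z * (w - z)))).1
      have habs : ‖(starRingEnd ℂ) z * (w - z)‖ ≤ ‖z‖ * r := by
        rw [norm_mul, Complex.norm_conj]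
        exact mul_le_mul_of_nonneg_left hwz hz0.le
      linarith
    rw [h1]
    have h4 : (↑(Complex.normSq z) + (starRingEnd ℂ) z * (w - z)).re
        = Complex.normSq z + ((starRingEnd ℂ) z * (w - z)).re := by simp
    rw [h4]
    have hnsq : Complex.normSq z = ‖z‖ ^ 2 := (Complex.sq_norm z).symm
    nlinarith
  have hslit : ∀ w ∈ closedBall z r, (starRingEnd ℂ) z * w ∈ Complex.slitPlane :=
    fun w hw => Or.inl (hre w hw)
  have hdiff : DifferentiableOn ℂ f (closedBall z r) := by
    intro w hw
    exact ((Complex.differentiableAt_log (hslit w hw)).comp w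
      ((differentiable_const _).mul differentiable_id).differentiableAt).differentiableWithinAt
  have hdc : DiffContOnCl ℂ f (ball z r) := by
    apply DifferentiableOn.diffContOnCl
    rwa [closure_ball z hr.ne']
  have hmv := mean_value_complex hr hdc
  have hmemθ : ∀ θ : ℝ, circleMap z r θ ∈ closedBall z r := by
    intro θ
    simp [circleMap, Complex.dist_eq, norm_exp_ofReal_mul_I, abs_of_pos hr]
  have hcont : Continuous fun θ : ℝ => f (circleMap z r θ) := by
    rw [continuous_iff_continuousAt]
    intro θ
    exact ContinuousAt.clog ((continuous_const.mul (continuous_circleMap z r)).continuousAt)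
      (hslit _ (hmemθ θ))
  have hint : IntervalIntegrable (fun θ : ℝ => f (circleMap z r θ)) volume 0 (2*π) :=
    hcont.intervalIntegrable _ _
  have hreint := Complex.reCLM.intervalIntegral_comp_comm hint
  rw [hmv] at hreint
  have hre_fz : ∀ w ∈ closedBall z r, (f w).re
      = Real.log (‖z‖) + Real.log (‖w‖) := by
    intro w hw
    have hw0 : w ≠ 0 := by
      intro h0
      have := hre w hw
      rw [h0, mul_zero] at this
      simp at this
    rw [hf]
    simp only [Complex.log_re, norm_mul, Complex.norm_conj]
    rw [Real.log_mul hz0.ne' (norm_ne_zero_iff.mpr hw0)]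
  have e1 : ∫ θ in (0:ℝ)..(2*π), (f (circleMap z r θ)).re = 2*π*(f z).re := by
    simpa using hreint
  have hintre : IntervalIntegrable (fun θ : ℝ => (f (circleMap z r θ)).re) volume 0 (2*π) :=
    (Complex.continuous_re.comp hcont).intervalIntegrable _ _
  have e3 : (f z).re = Real.log (‖z‖) + Real.log (‖z‖) :=
    hre_fz z (mem_closedBall_self hr.le)
  have e4 : ∫ θ in (0:ℝ)..(2*π), Real.log (‖circleMap z r θ‖)
      = ∫ θ in (0:ℝ)..(2*π), ((f (circleMap z r θ)).re - Real.log (‖z‖)) := by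
    apply intervalIntegral.integral_congr
    intro θ _
    simp only []
    rw [hre_fz _ (hmemθ θ)]
    ring
  rw [e4, intervalIntegral.integral_sub hintre (intervalIntegrable_const), e1,
    intervalIntegral.integral_const, e3]
  simp
  ring


lemma integral_sq_circle (z : ℂ) (r : ℝ) :
    ∫ θ in (0:ℝ)..(2*π), (‖circleMap z r θ‖)^2
      = 2*π*((‖z‖)^2 + r^2) := by
  have expand : ∀ θ : ℝ, (‖circleMap z r θ‖)^2
      = ((‖z‖)^2 + r^2) + ((2*r*z.re) * Real.cos θ + (2*r*z.im) * Real.sin θ) := by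
    intro θ
    rw [Complex.sq_norm, Complex.normSq_apply, Complex.sq_norm, Complex.normSq_apply]
    simp only [circleMap, Complex.add_re, Complex.add_im, Complex.mul_re, Complex.mul_im,
      Complex.ofReal_re, Complex.ofReal_im, Complex.exp_mul_I, Complex.cos_ofReal_re,
      Complex.sin_ofReal_re, Complex.cos_ofReal_im, Complex.sin_ofReal_im,
      Complex.I_re, Complex.I_im]
    have := Real.sin_sq_add_cos_sq θ
    nlinarith [Real.sin_sq_add_cos_sq θ]
  rw [intervalIntegral.integral_congr (g := fun θ : ℝ =>
    ((‖z‖)^2 + r^2) + ((2*r*z.re) * Real.cos θ + (2*r*z.im) * Real.sin θ))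
    (fun θ _ => expand θ)]
  rw [intervalIntegral.integral_add (f := fun _ => ‖z‖^2 + r^2)
    (g := fun θ => 2*r*z.re*Real.cos θ + 2*r*z.im*Real.sin θ) intervalIntegrable_const
    (((continuous_const.mul Real.continuous_cos).add
      (continuous_const.mul Real.continuous_sin)).intervalIntegrable _ _),
    intervalIntegral.integral_add (f := fun θ => 2*r*z.re*Real.cos θ)
      (g := fun θ => 2*r*z.im*Real.sin θ)
      ((continuous_const.mul Real.continuous_cos).intervalIntegrable _ _)
      ((continuous_const.mul Real.continuous_sin).intervalIntegrable _ _),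
    intervalIntegral.integral_const_mul, intervalIntegral.integral_const_mul,
    integral_cos, integral_sin,
    intervalIntegral.integral_const]
  simp [Real.sin_two_pi, Real.cos_two_pi]

set_option maxHeartbeats 1600000 in
theorem stmt_11 (U : Set ℂ) (hU : IsOpen U) (hDU : closedBall (0:ℂ) 1 ⊆ U)
    (v : ℂ → ℝ) (hv : SubharmonicOn v U)
    (hlt : ∀ z ∈ ball (0:ℂ) 1, v z < 1)
    (hbd : ∀ z ∈ sphere (0:ℂ) 1, v z = 1) :
    ∃ c : ℝ, 0 < c ∧ ∀ z ∈ closedBall (0:ℂ) 1, v z ≤ 1 - c * (1 - ‖z‖) := by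
  have habs_mem : ∀ w : ℂ, ‖w‖ ≤ 1 → w ∈ closedBall (0:ℂ) 1 := by
    intro w hw; simp [mem_closedBall, Complex.dist_eq, hw]
  have habs_of_mem : ∀ w : ℂ, w ∈ closedBall (0:ℂ) 1 → ‖w‖ ≤ 1 := by
    intro w hw; simpa [mem_closedBall, Complex.dist_eq] using hw
  -- inner maximum m
  have hBc : IsCompact (closedBall (0:ℂ) (1/2)) := isCompact_closedBall _ _
  have hBsub : closedBall (0:ℂ) (1/2) ⊆ U := fun w hw =>
    hDU (closedBall_subset_closedBall (by norm_num) hw)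
  obtain ⟨p, hpB, hpmax⟩ := usc_exists_max hBc isClosed_closedBall
    ⟨0, by norm_num [mem_closedBall]⟩ (hv.1.mono hBsub)
  set m := v p with hm
  have hpabs : ‖p‖ ≤ 1/2 := by simpa [mem_closedBall, Complex.dist_eq] using hpB
  have hm1 : m < 1 := hlt p (by simp only [mem_ball, Complex.dist_eq, sub_zero]; linarith)
  -- constants
  set δ := min (1 - m) (1/2 : ℝ) with hδdef
  have hδ : 0 < δ := lt_min (by linarith) (by norm_num)
  have hδ1 : δ ≤ 1 - m := min_le_left _ _
  have hδ2 : δ ≤ 1/2 := min_le_right _ _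
  have hlog2 : 0 < Real.log 2 := Real.log_pos one_lt_two
  have hlog2' : 1/2 < Real.log 2 := by
    have := Real.log_two_gt_d9; linarith
  set a := δ / Real.log 2 with hadef
  have ha : 0 < a := div_pos hδ hlog2
  have halog : a * Real.log 2 = δ := div_mul_cancel₀ δ hlog2.ne'
  set b := a/4 with hbdef
  have hb : 0 < b := by positivity
  set c := a/2 with hcdef
  have hc : 0 < c := by positivity
  have hc_le_δ : c ≤ δ := by
    rw [hcdef, hadef, div_div]
    exact div_le_self hδ.le (by linarith)
  clear_value c b a δ m
  -- barrier
  set h : ℂ → ℝ := fun w => 1 + a * Real.log (‖w‖) + b * (1 - (‖w‖)^2)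
    with hhdef
  -- annulus
  set K : Set ℂ := (fun w : ℂ => ‖w‖) ⁻¹' (Icc (1/2 : ℝ) 1) with hKdef
  have hKmem : ∀ w : ℂ, w ∈ K ↔ 1/2 ≤ ‖w‖ ∧ ‖w‖ ≤ 1 := by
    intro w; simp [hKdef, mem_Icc]
  have hKclosed : IsClosed K := IsClosed.preimage continuous_norm isClosed_Icc
  have hKsubD : K ⊆ closedBall (0:ℂ) 1 := fun w hw => habs_mem w ((hKmem w).mp hw).2
  have hKU : K ⊆ U := fun w hw => hDU (hKsubD hw)
  have hKcompact : IsCompact K := (isCompact_closedBall (0:ℂ) 1).of_isClosed_subset hKclosed hKsubD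
  have hKne : K.Nonempty := ⟨1, by rw [hKmem]; norm_num⟩
  have hKne0 : ∀ w ∈ K, w ≠ 0 := by
    intro w hw h0
    have h1 := ((hKmem w).mp hw).1
    rw [h0] at h1
    norm_num at h1
  have hconth : ∀ w : ℂ, w ≠ 0 → ContinuousAt h w := by
    intro w hw
    apply ContinuousAt.add
    · apply ContinuousAt.add continuousAt_const
      exact continuousAt_const.mul ((Real.continuousAt_log (norm_ne_zero_iff.mpr hw)).comp
        continuous_norm.continuousAt)
    · exact continuousAt_const.mul
        (continuousAt_const.sub ((continuous_norm.continuousAt).pow 2))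
  -- u usc on K
  set u : ℂ → ℝ := fun w => v w - h w with hudef
  clear_value h
  have husc : UpperSemicontinuousOn u K := by
    intro x hx y hy
    set ε := (y - u x)/2 with hεdef
    have hε : 0 < ε := by rw [hεdef]; exact half_pos (sub_pos.mpr hy)
    have hv' : ∀ᶠ w in nhdsWithin x K, v w < v x + ε :=
      (hv.1.mono hKU) x hx (v x + ε) (by simp only [hudef] at hy ⊢; linarith)
    have hh' : ∀ᶠ w in nhdsWithin x K, h x - ε < h w := by
      have hcw : ContinuousWithinAt h K x := (hconth x (hKne0 x hx)).continuousWithinAt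
      exact hcw.eventually_const_lt (by linarith)
    filter_upwards [hv', hh'] with w h1 h2
    have h3 : u w < v x + ε - (h x - ε) := by simp only [hudef]; linarith
    calc u w < v x + ε - (h x - ε) := h3
      _ = u x + 2*ε := by simp only [hudef]; ring
      _ = y := by rw [hεdef]; ring
  obtain ⟨z₀, hz₀K, hmax⟩ := usc_exists_max hKcompact hKclosed hKne husc
  clear_value u
  have hlog_half : Real.log (1/2 : ℝ) = - Real.log 2 := by rw [one_div, Real.log_inv]
  -- key claim : u z₀ ≤ 0
  have hkey : u z₀ ≤ 0 := by
    by_contra hpos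
    push_neg at hpos
    obtain ⟨hz₀l, hz₀r⟩ := (hKmem z₀).mp hz₀K
    have hz₀pos : (0:ℝ) < ‖z₀‖ := by linarith
    have hne1 : ‖z₀‖ ≠ 1 := by
      intro h1
      have hv1 : v z₀ = 1 := hbd z₀ (by simp [mem_sphere, Complex.dist_eq, h1])
      have hh1 : h z₀ = 1 := by simp [hhdef, h1]
      simp [hudef, hv1, hh1] at hpos
    have hne2 : ‖z₀‖ ≠ 1/2 := by
      intro h1
      have hvm : v z₀ ≤ m := hpmax z₀ (by
        simp only [mem_closedBall, Complex.dist_eq, sub_zero, h1]; norm_num)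
      have hsq : (1:ℝ) - (1/2)^2 = 3/4 := by norm_num
      have hh2 : h z₀ = 1 - δ + b * (3/4) := by
        simp only [hhdef, h1, hlog_half, hsq]
        rw [mul_neg, halog]; ring
      have ht1 : u z₀ ≤ m - (1 - δ + b*(3/4)) := by simp only [hudef, hh2]; linarith
      have ht2 : u z₀ ≤ 0 := by linarith
      linarith
    have hz₀l' : 1/2 < ‖z₀‖ := lt_of_le_of_ne hz₀l (Ne.symm hne2)
    have hz₀r' : ‖z₀‖ < 1 := lt_of_le_of_ne hz₀r hne1
    -- lower bound for h z₀ and positivity of v z₀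
    have hlog_ge : -Real.log 2 ≤ Real.log (‖z₀‖) := by
      rw [← hlog_half]
      exact Real.log_le_log (by norm_num) hz₀l
    have hbnonneg : 0 ≤ b * (1 - (‖z₀‖)^2) := mul_nonneg hb.le (by nlinarith)
    have hh_lb : 1 - δ ≤ h z₀ := by
      have h4 : -δ ≤ a * Real.log (‖z₀‖) := by
        have := mul_le_mul_of_nonneg_left hlog_ge ha.le
        rw [mul_neg, halog] at this
        linarith
      simp only [hhdef]
      linarith
    have hvz₀pos : 0 < v z₀ := by
      have : u z₀ + h z₀ = v z₀ := by simp only [hudef]; ring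
      linarith
    -- radius
    set r := min (‖z₀‖ - 1/2) (1 - ‖z₀‖) / 2 with hrdef
    have hrmin1 := min_le_left (‖z₀‖ - 1/2) (1 - ‖z₀‖)
    have hrmin2 := min_le_right (‖z₀‖ - 1/2) (1 - ‖z₀‖)
    have hr : 0 < r := by
      rw [hrdef]
      apply div_pos (lt_min (by linarith) (by linarith)) (by norm_num)
    have hr1 : r ≤ (‖z₀‖ - 1/2)/2 := by rw [hrdef]; linarith
    have hr2 : r ≤ (1 - ‖z₀‖)/2 := by rw [hrdef]; linarith
    have hrz : r < ‖z₀‖ := by linarith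
    clear_value r
    have hsubU : closedBall z₀ r ⊆ U := by
      intro w hw
      apply hDU; apply habs_mem
      have hd : ‖w - z₀‖ ≤ r := by
        rw [← Complex.dist_eq]; exact mem_closedBall.mp hw
      have h3 := norm_add_le z₀ (w - z₀)
      have h4 : z₀ + (w - z₀) = w := by ring
      rw [h4] at h3
      linarith
    have hcircK : ∀ θ : ℝ, circleMap z₀ r θ ∈ K := by
      intro θ
      rw [hKmem]
      have hdist : dist (circleMap z₀ r θ) z₀ = r :=
        mem_sphere.mp (circleMap_mem_sphere z₀ hr.le θ)
      have htri : |‖circleMap z₀ r θ‖ - ‖z₀‖| ≤ r := by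
        have h5 := abs_norm_sub_norm_le (circleMap z₀ r θ) z₀
        rw [← dist_eq_norm, hdist] at h5
        simpa using h5
      have h6 := abs_le.mp htri
      constructor
      · linarith [h6.1]
      · linarith [h6.2]
    have hsm := hv.2 z₀ (hKU hz₀K) r hr hsubU
    have hcAvg : cAvg v z₀ r = (2*π)⁻¹ * ∫ θ in (0:ℝ)..(2*π), v (circleMap z₀ r θ) := rfl
    rw [hcAvg] at hsm
    by_cases hInt : IntervalIntegrable (fun θ : ℝ => v (circleMap z₀ r θ)) volume 0 (2*π)
    · -- integrable case
      have hlogc : Continuous fun θ : ℝ => Real.log (‖circleMap z₀ r θ‖) := by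
        rw [continuous_iff_continuousAt]; intro θ
        have h7 := ((hKmem _).mp (hcircK θ)).1
        have hne : ‖circleMap z₀ r θ‖ ≠ 0 := by
          intro h0; rw [h0] at h7; norm_num at h7
        exact ContinuousAt.comp (g := Real.log)
          (f := fun θ : ℝ => ‖circleMap z₀ r θ‖) (Real.continuousAt_log hne)
          (continuous_norm.continuousAt.comp (continuous_circleMap z₀ r).continuousAt)
      have hsqc : Continuous fun θ : ℝ => (‖circleMap z₀ r θ‖)^2 :=
        (continuous_norm.comp (continuous_circleMap z₀ r)).pow 2
      have hconthc : Continuous fun θ : ℝ => h (circleMap z₀ r θ) := by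
        simp only [hhdef]
        exact (continuous_const.add (continuous_const.mul hlogc)).add
          (continuous_const.mul (continuous_const.sub hsqc))
      have hinth : IntervalIntegrable (fun θ : ℝ => h (circleMap z₀ r θ)) volume 0 (2*π) :=
        hconthc.intervalIntegrable _ _
      have hintu : IntervalIntegrable (fun θ : ℝ => u (circleMap z₀ r θ)) volume 0 (2*π) := by
        simpa [hudef] using hInt.sub hinth
      have hπ : (0:ℝ) < 2*π := by positivity
      have hmono : ∫ θ in (0:ℝ)..(2*π), u (circleMap z₀ r θ) ≤ 2*π * u z₀ := by
        have h8 := intervalIntegral.integral_mono_on hπ.le hintu intervalIntegrable_const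
          (fun θ _ => hmax _ (hcircK θ))
        rwa [intervalIntegral.integral_const, sub_zero, smul_eq_mul] at h8
      have hIh : ∫ θ in (0:ℝ)..(2*π), h (circleMap z₀ r θ)
          = 2*π * h z₀ - 2*π * (b * r^2) := by
        have e : (fun θ : ℝ => h (circleMap z₀ r θ)) = fun θ : ℝ =>
            ((1:ℝ) + a * Real.log (‖circleMap z₀ r θ‖))
              + b * (1 - (‖circleMap z₀ r θ‖)^2) := by
          funext θ; simp only [hhdef]
        rw [e, intervalIntegral.integral_add (f := fun θ => 1 + a*Real.log ‖circleMap z₀ r θ‖)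
            (g := fun θ => b*(1-‖circleMap z₀ r θ‖^2))
            ((continuous_const.add (continuous_const.mul hlogc)).intervalIntegrable _ _)
            ((continuous_const.mul (continuous_const.sub hsqc)).intervalIntegrable _ _),
          intervalIntegral.integral_add (f := fun _ => (1:ℝ))
            (g := fun θ => a*Real.log ‖circleMap z₀ r θ‖) intervalIntegrable_const
            ((continuous_const.mul hlogc).intervalIntegrable _ _),
          intervalIntegral.integral_const, intervalIntegral.integral_const_mul,
          intervalIntegral.integral_const_mul,
          intervalIntegral.integral_sub intervalIntegrable_const (hsqc.intervalIntegrable _ _),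
          intervalIntegral.integral_const, integral_log_circle z₀ r hr hrz,
          integral_sq_circle z₀ r]
        simp only [hhdef, smul_eq_mul, sub_zero]
        ring
      have hsplit : ∫ θ in (0:ℝ)..(2*π), v (circleMap z₀ r θ)
          = (∫ θ in (0:ℝ)..(2*π), u (circleMap z₀ r θ))
            + ∫ θ in (0:ℝ)..(2*π), h (circleMap z₀ r θ) := by
        rw [← intervalIntegral.integral_add hintu hinth]
        apply intervalIntegral.integral_congr
        intro θ _
        simp only [hudef]; ring
      have hfinal : v z₀ ≤ u z₀ + h z₀ - b * r^2 := by
        rw [hsplit] at hsm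
        have h9 : (∫ θ in (0:ℝ)..(2*π), u (circleMap z₀ r θ))
            + ∫ θ in (0:ℝ)..(2*π), h (circleMap z₀ r θ)
            ≤ 2*π * (u z₀ + h z₀ - b * r^2) := by
          rw [hIh]
          have hexp : 2*π*(u z₀ + h z₀ - b*r^2)
              = 2*π*u z₀ + (2*π * h z₀ - 2*π*(b*r^2)) := by ring
          rw [hexp]
          linarith [hmono]
        calc v z₀ ≤ (2*π)⁻¹ * ((∫ θ in (0:ℝ)..(2*π), u (circleMap z₀ r θ))
              + ∫ θ in (0:ℝ)..(2*π), h (circleMap z₀ r θ)) := hsm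
          _ ≤ (2*π)⁻¹ * (2*π * (u z₀ + h z₀ - b * r^2)) :=
              mul_le_mul_of_nonneg_left h9 (by positivity)
          _ = u z₀ + h z₀ - b * r^2 := by
              rw [← mul_assoc, inv_mul_cancel₀ hπ.ne', one_mul]
      have hbr : 0 < b * r^2 := mul_pos hb (pow_pos hr 2)
      have : u z₀ ≤ u z₀ - b * r^2 := by simp only [hudef] at hfinal ⊢; linarith
      linarith
    · -- non-integrable case
      have h0 : ∫ θ in (0:ℝ)..(2*π), v (circleMap z₀ r θ) = 0 :=
        intervalIntegral.integral_undef hInt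
      rw [h0, mul_zero] at hsm
      linarith
  -- conclusion
  refine ⟨c, hc, ?_⟩
  intro z hz
  have hz1 : ‖z‖ ≤ 1 := habs_of_mem z hz
  rcases le_or_gt (‖z‖) (1/2) with hsmall | hbig
  · have hvz : v z ≤ m := hpmax z (by
      simp only [mem_closedBall, Complex.dist_eq, sub_zero]; linarith)
    have h1 : c * (1 - ‖z‖) ≤ c := by
      linarith [mul_nonneg hc.le (norm_nonneg z)]
    have h2 : c ≤ 1 - m := le_trans hc_le_δ hδ1
    linarith
  · have hzK : z ∈ K := (hKmem z).mpr ⟨hbig.le, hz1⟩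
    have hvh : v z ≤ h z := by
      have h3 := le_trans (hmax z hzK) hkey
      simp only [hudef] at h3; linarith
    have hzpos : 0 < ‖z‖ := by linarith
    have hlog_le : Real.log (‖z‖) ≤ ‖z‖ - 1 :=
      Real.log_le_sub_one_of_pos hzpos
    have hsq : 1 - (‖z‖)^2 ≤ 2*(1 - ‖z‖) := by
      nlinarith [sq_nonneg (1 - ‖z‖)]
    have h4 : h z ≤ 1 - c * (1 - ‖z‖) := by
      rw [hhdef]
      simp only
      rw [hcdef, hbdef]
      have e1 : a * Real.log (‖z‖) ≤ a * (‖z‖ - 1) :=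
        mul_le_mul_of_nonneg_left hlog_le ha.le
      have e2 : (a/4) * (1 - (‖z‖)^2) ≤ (a/4) * (2*(1 - ‖z‖)) :=
        mul_le_mul_of_nonneg_left hsq (by linarith)
      linarith [e1, e2]
    linarith
end
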